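/- arXiv:2503.06464 — 3 statements merged into one kernel-verified Lean document; each statement's English description precedes it below -/
import Mathlib

section
/- For every 𝐓 ∈ 𝒯̃_ℵ there exist pairings W₁,…,W_𝙼 of 𝐓 with 𝙼 = exp(ι(log log(ι^{-1}))⁴ℵ) such that: (1) Vert(W_i) ⊂ V(𝐓_ι)∖{root of 𝐓} for all 1 ≤ i ≤ 𝙼; (2) for all i and all descendant trees 𝐓′ of 𝐓 with |V(𝐓′)| ≥ log²(ι^{-1}), |Vert(W_i) ∩ V(𝐓′)| ≤ |V(𝐓′)|/log(ι^{-1}); (3) |Vert(W_i) △ Vert(W_j)| ≥ ιℵ/2 for all i ≠ j; (4) for all i, every pair (u,v) ∈ W_i satisfies (log log(ι^{-1}))^{10} ≤ dist_𝐓(u,v) ≤ 2(log log(ι^{-1}))^{10}, every u,v ∈ Vert(W_i) with (u,v) ∉ W_i satisfy dist_𝐓(u,v) ≥ 10(log log(ι^{-1}))^{10}, and for all i < j and u ∈ Vert(W_i), v ∈ Vert(W_j) with u ≠ v, dist_𝐓(u,v) ≥ (log log(ι^{-1}))^{10}. -/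
open Finset
open scoped Classical
noncomputable section

variable {V : Type*} [Fintype V] [DecidableEq V]

/-- `u` is a (weak) descendant of `v` in the tree `G` rooted at `r`:
`v` lies on the geodesic from the root to `u`. -/
def IsDesc (G : SimpleGraph V) (r v u : V) : Prop :=
  G.dist r u = G.dist r v + G.dist v u

/-- The vertex set of the descendant subtree of `v`. -/
def descFinset (G : SimpleGraph V) (r v : V) : Finset V :=
  Finset.univ.filter (fun u => IsDesc G r v u)

/-- The descendant subtree of `v`, as an induced subgraph. -/
def descGraph (G : SimpleGraph V) (r v : V) :
    SimpleGraph {u // u ∈ descFinset G r v} :=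
  G.induce _

/-- `c` is a child of `p` in the tree `G` rooted at `r`. -/
def IsChild (G : SimpleGraph V) (r p c : V) : Prop :=
  G.Adj p c ∧ G.dist r c = G.dist r p + 1

/-- The children of `p`. -/
def childrenFinset (G : SimpleGraph V) (r p : V) : Finset V :=
  Finset.univ.filter (fun c => IsChild G r p c)

/-- The descendant subtree of `u` is an arm-path (every vertex of it has at most one
child). -/
def IsArm (G : SimpleGraph V) (r u : V) : Prop :=
  ∀ w, IsDesc G r u w → (childrenFinset G r w).card ≤ 1

/-- The degree of a vertex, as a `Finset` count. -/
def degC (G : SimpleGraph V) (v : V) : ℕ :=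
  (Finset.univ.filter (fun w => G.Adj v w)).card

/-- The graph obtained from `G` by attaching, at each vertex `v`, a pendant path
(arm-path) of length `x v` (no attachment when `x v = 0`). -/
def attachGraph (G : SimpleGraph V) (x : V → ℕ) :
    SimpleGraph (V ⊕ (Σ v : V, Fin (x v))) where
  Adj a b :=
    match a, b with
    | Sum.inl a, Sum.inl b => G.Adj a b
    | Sum.inl a, Sum.inr ⟨v, i⟩ => a = v ∧ (i : ℕ) = 0
    | Sum.inr ⟨v, i⟩, Sum.inl a => a = v ∧ (i : ℕ) = 0
    | Sum.inr ⟨v, i⟩, Sum.inr ⟨w, j⟩ => v = w ∧ ((i : ℕ) + 1 = (j : ℕ) ∨ (j : ℕ) + 1 = (i : ℕ))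
  symm := ⟨by
    rintro (a | ⟨v, i⟩) (b | ⟨w, j⟩) h
    · exact G.adj_symm h
    · exact h
    · exact h
    · obtain ⟨rfl, h⟩ := h
      exact ⟨rfl, h.symm⟩⟩
  loopless := ⟨by
    rintro (a | ⟨v, i⟩) h
    · exact G.ne_of_adj h rfl
    · rcases h with ⟨-, h | h⟩ <;> omega⟩

/-- The `∼` relation on trees ("becoming isomorphic after attaching few arm-paths of
length at most `log²(ι⁻¹)` at non-leaf vertices"); Definition 2.4 of the paper. -/
def SimilarTree (ι : ℝ) {V W : Type*} [Fintype V] [DecidableEq V] [Fintype W] [DecidableEq W]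
    (G : SimpleGraph V) (H : SimpleGraph W) : Prop :=
  ∃ x : V → ℕ, ∃ y : W → ℕ,
    ((Finset.univ.filter (fun v => x v ≠ 0)).card : ℝ)
        ≤ (Fintype.card V : ℝ) / Real.log ι⁻¹ ∧
    ((Finset.univ.filter (fun w => y w ≠ 0)).card : ℝ)
        ≤ (Fintype.card W : ℝ) / Real.log ι⁻¹ ∧
    (∀ v, x v ≠ 0 → degC G v ≠ 1) ∧
    (∀ w, y w ≠ 0 → degC H w ≠ 1) ∧
    (∀ v, (x v : ℝ) ≤ (Real.log ι⁻¹) ^ 2) ∧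
    (∀ w, (y w : ℝ) ≤ (Real.log ι⁻¹) ^ 2) ∧
    Nonempty (attachGraph G x ≃g attachGraph H y)

/-- The vertex set of the subtree `𝐓_ι` (vertices whose descendant subtree has at
least `log²(ι⁻¹)` vertices). -/
def iotaFinset (ι : ℝ) (G : SimpleGraph V) (r : V) : Finset V :=
  Finset.univ.filter (fun v => (Real.log ι⁻¹) ^ 2 ≤ ((descFinset G r v).card : ℝ))

/-- Conditions (1)–(5) of Definition 2.6 of the paper, defining membership of a
rooted tree in the family `𝒯̃_ℵ` of desired rooted trees:
(1) all degrees are at most `log²(ι⁻¹)`; (2) no arm-path of length at least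
`log²(ι⁻¹)`; (3) `|V(𝐓_ι)| ≥ ℵ / log⁴(ι⁻¹)`; (4) distinct descendant trees with at
least `log²(ι⁻¹)` vertices sharing the same parent are not `∼`-related;
(5) the root has exactly two children trees of sizes `⌊(ℵ−1)/2⌋` and `⌈(ℵ−1)/2⌉`,
neither of which is `∼`-related to any descendant tree of the other. -/
def DesiredTree (ι : ℝ) (N : ℕ) (G : SimpleGraph (Fin N)) (r : Fin N) : Prop :=
  G.IsTree ∧
  (∀ v, (degC G v : ℝ) ≤ (Real.log ι⁻¹) ^ 2) ∧
  (∀ u, IsArm G r u → ((descFinset G r u).card : ℝ) - 1 < (Real.log ι⁻¹) ^ 2) ∧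
  ((N : ℝ) / (Real.log ι⁻¹) ^ 4 ≤ ((iotaFinset ι G r).card : ℝ)) ∧
  (∀ p u u', IsChild G r p u → IsChild G r p u' → u ≠ u' →
      (Real.log ι⁻¹) ^ 2 ≤ ((descFinset G r u).card : ℝ) →
      (Real.log ι⁻¹) ^ 2 ≤ ((descFinset G r u').card : ℝ) →
      ¬ SimilarTree ι (descGraph G r u) (descGraph G r u')) ∧
  (∃ u₁ u₂, u₁ ≠ u₂ ∧ childrenFinset G r r = {u₁, u₂} ∧
      (descFinset G r u₁).card = (N - 1) / 2 ∧
      (descFinset G r u₂).card = N - 1 - (N - 1) / 2 ∧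
      (∀ w, IsDesc G r u₂ w → ¬ SimilarTree ι (descGraph G r u₁) (descGraph G r w)) ∧
      (∀ w, IsDesc G r u₁ w → ¬ SimilarTree ι (descGraph G r u₂) (descGraph G r w)))



/-- The set of vertices appearing in an (indexed) pairing. -/
def vertsOf {N m : ℕ} (W : Fin m → Fin N × Fin N) : Finset (Fin N) :=
  Finset.univ.image (fun k => (W k).1) ∪ Finset.univ.image (fun k => (W k).2)

/-- `W` is a pairing: all `2m` endpoint vertices are distinct. -/
def IsPairing {N m : ℕ} (W : Fin m → Fin N × Fin N) : Prop :=
  Function.Injective (fun q : Fin m × Bool => if q.2 then (W q.1).1 else (W q.1).2)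

/-- `u` and `v` are paired by `W`. -/
def Paired {N m : ℕ} (W : Fin m → Fin N × Fin N) (u v : Fin N) : Prop :=
  ∃ k, W k = (u, v) ∨ W k = (v, u)


set_option linter.unusedSectionVars false
set_option maxHeartbeats 1000000

namespace DVS

variable {G : SimpleGraph V} {r : V}

lemma dist_exists_mid (hc : G.Connected) (a b : V) (k : ℕ) (hk : k ≤ G.dist a b) :
    ∃ u : V, G.dist a u = k ∧ G.dist u b = G.dist a b - k := by
  induction k with
  | zero => exact ⟨a, by simp⟩
  | succ n ih =>
    obtain ⟨u, hu1, hu2⟩ := ih (Nat.le_of_succ_le hk)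
    have hub : 1 ≤ G.dist u b := by omega
    obtain ⟨p, hp⟩ := hc.exists_walk_length_eq_dist u b
    cases p with
    | nil => simp at hp; omega
    | @cons _ c _ h q =>
      refine ⟨c, ?_, ?_⟩ <;>
      · have t1 : G.dist a c ≤ G.dist a u + G.dist u c := hc.dist_triangle
        have t2 : G.dist u c ≤ 1 := by
          simpa using SimpleGraph.dist_le h.toWalk
        have t3 : G.dist c b ≤ q.length := SimpleGraph.dist_le q
        have t4 : G.dist a b ≤ G.dist a c + G.dist c b := hc.dist_triangle
        simp only [SimpleGraph.Walk.length_cons] at hp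
        omega

lemma desc_trans (hc : G.Connected) {u v w : V}
    (h1 : IsDesc G r u v) (h2 : IsDesc G r v w) : IsDesc G r u w := by
  unfold IsDesc at *
  have t1 : G.dist u w ≤ G.dist u v + G.dist v w := hc.dist_triangle
  have t2 : G.dist r w ≤ G.dist r u + G.dist u w := hc.dist_triangle
  omega

lemma desc_self (v : V) : IsDesc G r v v := by
  unfold IsDesc; simp

lemma anc_unique (ht : G.IsTree) {a b w : V}
    (hda : G.dist r a = G.dist r b) (h1 : IsDesc G r a w) (h2 : IsDesc G r b w) :
    a = b := by
  have hc := ht.isConnected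
  obtain ⟨pa, hpa⟩ := hc.exists_walk_length_eq_dist r a
  obtain ⟨paw, hpaw⟩ := hc.exists_walk_length_eq_dist a w
  obtain ⟨pb, hpb⟩ := hc.exists_walk_length_eq_dist r b
  obtain ⟨pbw, hpbw⟩ := hc.exists_walk_length_eq_dist b w
  have hWa : (pa.append paw).length = G.dist r w := by
    rw [SimpleGraph.Walk.length_append, hpa, hpaw, h1]
  have hWb : (pb.append pbw).length = G.dist r w := by
    rw [SimpleGraph.Walk.length_append, hpb, hpbw, h2]
  have pathA : (pa.append paw).IsPath := SimpleGraph.Walk.isPath_of_length_eq_dist _ hWa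
  have pathB : (pb.append pbw).IsPath := SimpleGraph.Walk.isPath_of_length_eq_dist _ hWb
  have huniq := SimpleGraph.isAcyclic_iff_path_unique.mp ht.IsAcyclic
    (⟨pa.append paw, pathA⟩ : G.Path r w) (⟨pb.append pbw, pathB⟩ : G.Path r w)
  have hmem : a ∈ (pb.append pbw).support := by
    have hmem0 : a ∈ (pa.append paw).support := by
      rw [SimpleGraph.Walk.mem_support_append_iff]
      exact Or.inr (SimpleGraph.Walk.start_mem_support _)
    have hval : pa.append paw = pb.append pbw := congrArg Subtype.val huniq
    rwa [hval] at hmem0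
  rw [SimpleGraph.Walk.mem_support_append_iff] at hmem
  cases hmem with
  | inl hm =>
    have hsplit := congrArg SimpleGraph.Walk.length (pb.take_spec hm)
    rw [SimpleGraph.Walk.length_append] at hsplit
    have l1 : G.dist r a ≤ (pb.takeUntil a hm).length := SimpleGraph.dist_le _
    have l2 : G.dist a b ≤ (pb.dropUntil a hm).length := SimpleGraph.dist_le _
    have hz : G.dist a b = 0 := by omega
    exact (hc.dist_eq_zero_iff).mp hz
  | inr hm =>
    have hsplit := congrArg SimpleGraph.Walk.length (pbw.take_spec hm)
    rw [SimpleGraph.Walk.length_append] at hsplit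
    have l1 : G.dist b a ≤ (pbw.takeUntil a hm).length := SimpleGraph.dist_le _
    have l2 : G.dist a w ≤ (pbw.dropUntil a hm).length := SimpleGraph.dist_le _
    unfold IsDesc at h1 h2
    have hz : G.dist b a = 0 := by omega
    exact ((hc.dist_eq_zero_iff).mp hz).symm

lemma desc_between (ht : G.IsTree) {u v w : V}
    (h1 : IsDesc G r u w) (h2 : IsDesc G r v w) (hle : G.dist r u ≤ G.dist r v) :
    IsDesc G r u v := by
  have hc := ht.isConnected
  obtain ⟨u', e1, e2⟩ := dist_exists_mid hc r v (G.dist r u) hle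
  have t1 : G.dist u' w ≤ G.dist u' v + G.dist v w := hc.dist_triangle
  have t2 : G.dist r w ≤ G.dist r u' + G.dist u' w := hc.dist_triangle
  unfold IsDesc at h1 h2 ⊢
  have hdesc : IsDesc G r u' w := by unfold IsDesc; omega
  have heq : u' = u := anc_unique ht (by omega) hdesc (by unfold IsDesc; omega)
  subst heq
  omega

lemma mem_descFinset {v u : V} : u ∈ descFinset G r v ↔ IsDesc G r v u := by
  simp [descFinset]

lemma desc_subset (hc : G.Connected) {u v : V} (h : IsDesc G r u v) :
    descFinset G r v ⊆ descFinset G r u := by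
  intro w hw
  rw [mem_descFinset] at *
  exact desc_trans hc h hw

lemma desc_eq_of_mutual (hc : G.Connected) {u v : V}
    (h1 : IsDesc G r u v) (h2 : IsDesc G r v u) : u = v := by
  unfold IsDesc at *
  have hz : G.dist u v = 0 := by omega
  exact (hc.dist_eq_zero_iff).mp hz

lemma desc_overlap (ht : G.IsTree) {u v w : V}
    (h : w ∈ descFinset G r u) (h' : w ∈ descFinset G r v) :
    IsDesc G r u v ∨ IsDesc G r v u := by
  rw [mem_descFinset] at h h'
  rcases le_total (G.dist r u) (G.dist r v) with hle | hle
  · exact Or.inl (desc_between ht h h' hle)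
  · exact Or.inr (desc_between ht h' h hle)

def ballF (G : SimpleGraph V) (v : V) (R : ℕ) : Finset V :=
  Finset.univ.filter (fun w => G.dist v w ≤ R)

def sphereF (G : SimpleGraph V) (v : V) (k : ℕ) : Finset V :=
  Finset.univ.filter (fun w => G.dist v w = k)

lemma sphere_card (hc : G.Connected) {Δ : ℕ} (hdeg : ∀ x : V, G.degree x ≤ Δ)
    (v : V) (k : ℕ) : (sphereF G v k).card ≤ Δ ^ k := by
  induction k with
  | zero =>
    have hsub : sphereF G v 0 ⊆ {v} := by
      intro w hw
      simp only [sphereF, mem_filter] at hw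
      have := (hc.dist_eq_zero_iff).mp hw.2
      simp [this.symm]
    simpa using Finset.card_le_card hsub
  | succ n ih =>
    have hsub : sphereF G v (n+1) ⊆ (sphereF G v n).biUnion (G.neighborFinset ·) := by
      intro w hw
      simp only [sphereF, mem_filter] at hw
      obtain ⟨u, hu1, hu2⟩ := dist_exists_mid hc v w n (by omega)
      have hadj : G.Adj u w := by
        rw [← SimpleGraph.dist_eq_one_iff_adj]; omega
      rw [Finset.mem_biUnion]
      exact ⟨u, by simp [sphereF, hu1], by simpa using hadj⟩
    calc (sphereF G v (n+1)).card ≤ _ := Finset.card_le_card hsub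
      _ ≤ ∑ u ∈ sphereF G v n, (G.neighborFinset u).card := Finset.card_biUnion_le
      _ ≤ ∑ u ∈ sphereF G v n, Δ := Finset.sum_le_sum (fun u _ => hdeg u)
      _ = (sphereF G v n).card * Δ := by simp [Finset.sum_const, mul_comm]
      _ ≤ Δ ^ n * Δ := Nat.mul_le_mul_right _ ih
      _ = Δ ^ (n+1) := by ring

lemma ball_card (hc : G.Connected) {Δ : ℕ} (hΔ : 1 ≤ Δ) (hdeg : ∀ x : V, G.degree x ≤ Δ)
    (v : V) (R : ℕ) : (ballF G v R).card ≤ (R + 1) * Δ ^ R := by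
  have hsub : ballF G v R ⊆ (Finset.range (R+1)).biUnion (fun k => sphereF G v k) := by
    intro w hw
    simp only [ballF, mem_filter] at hw
    rw [Finset.mem_biUnion]
    exact ⟨G.dist v w, by simp [Nat.lt_succ_iff, hw.2], by simp [sphereF]⟩
  calc (ballF G v R).card ≤ _ := Finset.card_le_card hsub
    _ ≤ ∑ k ∈ Finset.range (R+1), (sphereF G v k).card := Finset.card_biUnion_le
    _ ≤ ∑ k ∈ Finset.range (R+1), Δ ^ R := by
        refine Finset.sum_le_sum (fun k hk => ?_)
        exact le_trans (sphere_card hc hdeg v k)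
          (Nat.pow_le_pow_right hΔ (by simp [Nat.lt_succ_iff] at hk; omega))
    _ = (R+1) * Δ ^ R := by simp [Finset.sum_const, mul_comm]

lemma greedy (ht : G.IsTree) (Z : Finset V) (S₀ : ℕ) (A B K : ℝ)
    (hB : 1 ≤ B) (hK : 0 ≤ K)
    (hball : ∀ a : V, ((ballF G a S₀).card : ℝ) ≤ K)
    (n : ℕ) (hn : (n : ℝ) * (K + B) < Z.card) :
    ∃ T : Finset V, T.card = n ∧ T ⊆ Z ∧
      (∀ a ∈ T, ∀ b ∈ T, a ≠ b → S₀ < G.dist a b) ∧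
      (∀ v : V, A ≤ ((descFinset G r v).card : ℝ) →
        ((T ∩ descFinset G r v).card : ℝ) ≤ ((descFinset G r v).card : ℝ) / B + 1) := by
  have hc := ht.isConnected
  induction n with
  | zero =>
    refine ⟨∅, by simp, by simp, by simp, fun v _ => ?_⟩
    have hdiv : (0:ℝ) ≤ ((descFinset G r v).card : ℝ) / B := by positivity
    simp only [Finset.empty_inter, Finset.card_empty, Nat.cast_zero]
    linarith
  | succ n ih =>
    obtain ⟨T, hTcard, hTZ, hTsep, hTbud⟩ := ih (by
      have h1 : (n:ℝ) * (K + B) ≤ (n+1 : ℝ) * (K + B) := by nlinarith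
      push_cast at hn ⊢; linarith)
    set c : V → ℝ := fun v => ((descFinset G r v).card : ℝ) with hc_def
    set cnt : V → ℝ := fun v => ((T ∩ descFinset G r v).card : ℝ) with hcnt_def
    set F : Finset V := Finset.univ.filter (fun v => A ≤ c v ∧ c v / B < cnt v) with hF_def
    set MaxF : Finset V := F.filter
      (fun v => ∀ v' ∈ F, descFinset G r v ⊆ descFinset G r v' → v = v') with hMaxF_def
    have hcover : ∀ v ∈ F, ∃ v' ∈ MaxF, descFinset G r v ⊆ descFinset G r v' := by
      intro v hv
      set S : Finset V := F.filter (fun v' => descFinset G r v ⊆ descFinset G r v') with hS_def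
      have hSne : S.Nonempty := ⟨v, by simp [hS_def, hv]⟩
      obtain ⟨vm, hvmS, hvmmax⟩ := S.exists_max_image (fun u => (descFinset G r u).card) hSne
      simp only [hS_def, Finset.mem_filter] at hvmS
      refine ⟨vm, ?_, hvmS.2⟩
      simp only [hMaxF_def, Finset.mem_filter]
      refine ⟨hvmS.1, fun v' hv' hsub => ?_⟩
      have hv'S : v' ∈ S := by
        simp only [hS_def, Finset.mem_filter]
        exact ⟨hv', hvmS.2.trans hsub⟩
      have hle := hvmmax v' hv'S
      have heq : descFinset G r vm = descFinset G r v' :=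
        Finset.eq_of_subset_of_card_le hsub hle
      have m1 : vm ∈ descFinset G r v' := heq ▸ mem_descFinset.mpr (desc_self vm)
      have m2 : v' ∈ descFinset G r vm := heq.symm ▸ mem_descFinset.mpr (desc_self v')
      exact desc_eq_of_mutual hc (mem_descFinset.mp m2) (mem_descFinset.mp m1)
    have hdisj : ∀ v₁ ∈ MaxF, ∀ v₂ ∈ MaxF, v₁ ≠ v₂ →
        Disjoint (descFinset G r v₁) (descFinset G r v₂) := by
      intro v₁ h₁ v₂ h₂ hne
      rw [Finset.disjoint_left]
      intro w hw₁ hw₂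
      simp only [hMaxF_def, Finset.mem_filter] at h₁ h₂
      rcases desc_overlap ht hw₁ hw₂ with hd | hd
      · exact hne (h₂.2 v₁ h₁.1 (desc_subset hc hd)).symm
      · exact hne (h₁.2 v₂ h₂.1 (desc_subset hc hd))
    set Bad : Finset V := (T.biUnion (fun a => ballF G a S₀)) ∪
      (F.biUnion (fun v => descFinset G r v)) with hBad_def
    have hBadcard : ((Bad.card : ℝ)) ≤ n * K + B * n := by
      have h1 : ((T.biUnion (fun a => ballF G a S₀)).card : ℝ) ≤ n * K := by
        calc ((T.biUnion (fun a => ballF G a S₀)).card : ℝ)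
            ≤ ((∑ a ∈ T, (ballF G a S₀).card : ℕ) : ℝ) := by
              exact_mod_cast Nat.cast_le.mpr Finset.card_biUnion_le
          _ = ∑ a ∈ T, ((ballF G a S₀).card : ℝ) := by push_cast; ring
          _ ≤ ∑ a ∈ T, K := Finset.sum_le_sum (fun a _ => hball a)
          _ = T.card * K := by rw [Finset.sum_const]; simp
          _ = n * K := by rw [hTcard]
      have h2 : ((F.biUnion (fun v => descFinset G r v)).card : ℝ) ≤ B * n := by
        have hsub : F.biUnion (fun v => descFinset G r v) ⊆
            MaxF.biUnion (fun v => descFinset G r v) := by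
          intro w hw
          rw [Finset.mem_biUnion] at hw ⊢
          obtain ⟨v, hv, hwv⟩ := hw
          obtain ⟨v', hv', hsub⟩ := hcover v hv
          exact ⟨v', hv', hsub hwv⟩
        have hcBU : ((MaxF.biUnion (fun v => descFinset G r v)).card : ℝ)
            ≤ ∑ v ∈ MaxF, c v := by
          calc ((MaxF.biUnion (fun v => descFinset G r v)).card : ℝ)
              ≤ ((∑ v ∈ MaxF, (descFinset G r v).card : ℕ) : ℝ) := by
                exact_mod_cast Nat.cast_le.mpr Finset.card_biUnion_le
            _ = ∑ v ∈ MaxF, c v := by push_cast; rfl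
        have hfull : ∀ v ∈ MaxF, c v ≤ B * cnt v := by
          intro v hv
          simp only [hMaxF_def, hF_def, Finset.mem_filter] at hv
          have h := hv.1.2.2
          have hB0 : 0 < B := by linarith
          rw [div_lt_iff₀ hB0] at h
          nlinarith
        have hsumcnt : ∑ v ∈ MaxF, cnt v ≤ (n : ℝ) := by
          have hdisj' : ∀ v₁ ∈ MaxF, ∀ v₂ ∈ MaxF, v₁ ≠ v₂ →
              Disjoint (T ∩ descFinset G r v₁) (T ∩ descFinset G r v₂) := by
            intro v₁ h₁ v₂ h₂ hne
            exact Finset.disjoint_of_subset_left (Finset.inter_subset_right)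
              (Finset.disjoint_of_subset_right (Finset.inter_subset_right)
                (hdisj v₁ h₁ v₂ h₂ hne)) |>.symm |>.symm
          have hbu : ∑ v ∈ MaxF, (T ∩ descFinset G r v).card
              = (MaxF.biUnion (fun v => T ∩ descFinset G r v)).card := by
            rw [Finset.card_biUnion hdisj']
          have hle : (MaxF.biUnion (fun v => T ∩ descFinset G r v)).card ≤ T.card := by
            apply Finset.card_le_card
            intro w hw
            rw [Finset.mem_biUnion] at hw
            obtain ⟨v, _, hwv⟩ := hw
            exact Finset.mem_of_mem_inter_left hwv
          calc ∑ v ∈ MaxF, cnt v = ((∑ v ∈ MaxF, (T ∩ descFinset G r v).card : ℕ) : ℝ) := by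
                push_cast; rfl
            _ ≤ (T.card : ℝ) := by rw [hbu]; exact_mod_cast hle
            _ = n := by rw [hTcard]
        have hcnt0 : ∀ v ∈ MaxF, 0 ≤ cnt v := fun v _ => by positivity
        calc ((F.biUnion (fun v => descFinset G r v)).card : ℝ)
            ≤ ((MaxF.biUnion (fun v => descFinset G r v)).card : ℝ) := by
              exact_mod_cast Nat.cast_le.mpr (Finset.card_le_card hsub)
          _ ≤ ∑ v ∈ MaxF, c v := hcBU
          _ ≤ ∑ v ∈ MaxF, B * cnt v := Finset.sum_le_sum hfull
          _ = B * ∑ v ∈ MaxF, cnt v := by rw [Finset.mul_sum]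
          _ ≤ B * n := by nlinarith
      calc ((Bad.card : ℝ)) ≤ ((T.biUnion (fun a => ballF G a S₀)).card : ℝ)
            + ((F.biUnion (fun v => descFinset G r v)).card : ℝ) := by
            rw [hBad_def]; exact_mod_cast Nat.cast_le.mpr (Finset.card_union_le _ _)
        _ ≤ n * K + B * n := by linarith
    have hzex : ∃ z, z ∈ Z \ Bad := by
      have hlt : (Bad.card : ℝ) < (Z.card : ℝ) := by
        have hmono : (n:ℝ) * K + B * n ≤ ((n:ℝ)+1) * (K + B) := by nlinarith
        push_cast at hn; linarith
      have hcard : Bad.card < Z.card := by exact_mod_cast hlt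
      have hpos : 0 < (Z \ Bad).card := by
        have := Finset.le_card_sdiff Bad Z
        omega
      exact Finset.card_pos.mp hpos
    obtain ⟨z, hz⟩ := hzex
    rw [Finset.mem_sdiff] at hz
    obtain ⟨hzZ, hzBad⟩ := hz
    simp only [hBad_def, Finset.mem_union, Finset.mem_biUnion, not_or, not_exists] at hzBad
    push_neg at hzBad
    obtain ⟨hzball, hzF⟩ := hzBad
    have hzT : z ∉ T := by
      intro hzT
      have := hzball z hzT
      simp [ballF, SimpleGraph.dist_self] at this
    refine ⟨insert z T, ?_, ?_, ?_, ?_⟩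
    · rw [Finset.card_insert_of_notMem hzT, hTcard]
    · intro w hw
      rw [Finset.mem_insert] at hw
      rcases hw with rfl | hw
      · exact hzZ
      · exact hTZ hw
    · intro a ha b hb hne
      rw [Finset.mem_insert] at ha hb
      rcases ha with rfl | ha
      · rcases hb with rfl | hb
        · exact absurd rfl hne
        · have := hzball b hb
          simp only [ballF, Finset.mem_filter, Finset.mem_univ, true_and, not_le] at this
          rwa [SimpleGraph.dist_comm]
      · rcases hb with rfl | hb
        · have := hzball a ha
          simp only [ballF, Finset.mem_filter, Finset.mem_univ, true_and, not_le] at this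
          exact this
        · exact hTsep a ha b hb hne
    · intro v hv
      by_cases hzv : z ∈ descFinset G r v
      · have hnotF : v ∉ F := fun hvF => hzF v hvF hzv
        simp only [hF_def, Finset.mem_filter, Finset.mem_univ, true_and, not_and, not_lt] at hnotF
        have hcnt_le : cnt v ≤ c v / B := hnotF hv
        have hins : insert z T ∩ descFinset G r v = insert z (T ∩ descFinset G r v) := by
          rw [Finset.insert_inter_of_mem hzv]
        rw [hins]
        have hcle : (insert z (T ∩ descFinset G r v)).card ≤ (T ∩ descFinset G r v).card + 1 :=
          Finset.card_insert_le _ _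
        calc ((insert z (T ∩ descFinset G r v)).card : ℝ)
            ≤ ((T ∩ descFinset G r v).card : ℝ) + 1 := by exact_mod_cast hcle
          _ ≤ c v / B + 1 := by exact add_le_add_left hcnt_le 1
      · rw [Finset.insert_inter_of_notMem hzv]
        exact hTbud v hv

lemma hball_card (m t d : ℕ) (ht : 1 ≤ t) (c : Fin m → Fin t) :
    ((Finset.univ.filter (fun y : Fin m → Fin t => hammingDist y c ≤ d)).card : ℕ)
      ≤ 2 ^ m * t ^ d := by
  set P : Finset (Finset (Fin m)) := Finset.univ.powerset.filter (fun S => S.card ≤ d) with hP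
  have hsub : (Finset.univ.filter (fun y : Fin m → Fin t => hammingDist y c ≤ d)) ⊆
      P.biUnion (fun S => Finset.univ.filter (fun y : Fin m → Fin t => ∀ i ∉ S, y i = c i)) := by
    intro y hy
    simp only [Finset.mem_filter, Finset.mem_univ, true_and] at hy
    rw [Finset.mem_biUnion]
    refine ⟨Finset.univ.filter (fun i => y i ≠ c i), ?_, ?_⟩
    · simp only [hP, Finset.mem_filter, Finset.mem_powerset]
      exact ⟨Finset.subset_univ _, hy⟩
    · simp only [Finset.mem_filter, Finset.mem_univ, true_and]
      intro i hi
      simpa using hi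
  have hAS : ∀ S : Finset (Fin m), S.card ≤ d →
      (Finset.univ.filter (fun y : Fin m → Fin t => ∀ i ∉ S, y i = c i)).card ≤ t ^ d := by
    intro S hS
    have hinj : ((Finset.univ.filter
        (fun y : Fin m → Fin t => ∀ i ∉ S, y i = c i))).card
        ≤ (Finset.univ : Finset ({x // x ∈ S} → Fin t)).card := by
      apply Finset.card_le_card_of_injOn (fun y => (fun i : {x // x ∈ S} => y i.1))
      · intro y _; exact Finset.mem_univ _
      · intro y₁ h₁ y₂ h₂ heq
        simp only [Finset.coe_filter, Finset.mem_univ, true_and, Set.mem_setOf_eq] at h₁ h₂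
        funext i
        by_cases hi : i ∈ S
        · exact congrFun heq ⟨i, hi⟩
        · rw [h₁ i hi, h₂ i hi]
    have hcard : (Finset.univ : Finset ({x // x ∈ S} → Fin t)).card = t ^ S.card := by
      rw [Finset.card_univ, Fintype.card_fun]
      simp [Fintype.card_coe]
    calc _ ≤ _ := hinj
      _ = t ^ S.card := hcard
      _ ≤ t ^ d := Nat.pow_le_pow_right ht hS
  calc (Finset.univ.filter (fun y : Fin m → Fin t => hammingDist y c ≤ d)).card
      ≤ (P.biUnion (fun S => Finset.univ.filter
          (fun y : Fin m → Fin t => ∀ i ∉ S, y i = c i))).card := Finset.card_le_card hsub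
    _ ≤ ∑ S ∈ P, (Finset.univ.filter
          (fun y : Fin m → Fin t => ∀ i ∉ S, y i = c i)).card := Finset.card_biUnion_le
    _ ≤ ∑ S ∈ P, t ^ d := by
        refine Finset.sum_le_sum (fun S hS => ?_)
        simp only [hP, Finset.mem_filter] at hS
        exact hAS S hS.2
    _ = P.card * t ^ d := by rw [Finset.sum_const]; simp
    _ ≤ 2 ^ m * t ^ d := by
        apply Nat.mul_le_mul_right
        calc P.card ≤ (Finset.univ : Finset (Fin m)).powerset.card := Finset.card_filter_le _ _
          _ = 2 ^ m := by simp [Finset.card_powerset]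

lemma gv_code (m t d M : ℕ) (ht : 1 ≤ t)
    (hM : (M : ℝ) * ((2:ℝ) ^ m * (t:ℝ) ^ d) ≤ (t:ℝ) ^ m) :
    ∃ cw : Fin M → (Fin m → Fin t), ∀ i j, i ≠ j → d + 1 ≤ hammingDist (cw i) (cw j) := by
  haveI : NeZero t := ⟨by omega⟩
  set α := (Fin m → Fin t)
  set Good : Finset (Finset α) := Finset.univ.filter
    (fun C : Finset α => ∀ x ∈ C, ∀ y ∈ C, x ≠ y → d + 1 ≤ hammingDist x y) with hGood
  have hne : Good.Nonempty := ⟨∅, by simp [hGood]⟩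
  obtain ⟨C, hCGood, hCmax⟩ := Good.exists_max_image (fun C => C.card) hne
  simp only [hGood, Finset.mem_filter, Finset.mem_univ, true_and] at hCGood
  have hcov : ∀ x : α, ∃ c ∈ C, hammingDist x c ≤ d := by
    intro x
    by_cases hx : x ∈ C
    · exact ⟨x, hx, by simp⟩
    by_contra hnc
    push_neg at hnc
    have hins : insert x C ∈ Good := by
      simp only [hGood, Finset.mem_filter, Finset.mem_univ, true_and]
      intro a ha b hb hab
      rw [Finset.mem_insert] at ha hb
      rcases ha with rfl | ha
      · rcases hb with rfl | hb
        · exact absurd rfl hab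
        · have := hnc b hb; omega
      · rcases hb with rfl | hb
        · have := hnc a ha; rw [hammingDist_comm]; omega
        · exact hCGood a ha b hb hab
    have := hCmax _ hins
    rw [Finset.card_insert_of_notMem hx] at this
    omega
  have hcount : (t:ℝ) ^ m ≤ (C.card : ℝ) * ((2:ℝ) ^ m * (t:ℝ) ^ d) := by
    have hsub : (Finset.univ : Finset α) ⊆
        C.biUnion (fun c => Finset.univ.filter (fun y : α => hammingDist y c ≤ d)) := by
      intro x _
      rw [Finset.mem_biUnion]
      obtain ⟨c, hc, hd⟩ := hcov x
      exact ⟨c, hc, by simp [hd]⟩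
    have h1 : (Finset.univ : Finset α).card ≤ C.card * (2 ^ m * t ^ d) := by
      calc (Finset.univ : Finset α).card
          ≤ (C.biUnion (fun c => Finset.univ.filter
              (fun y : α => hammingDist y c ≤ d))).card := Finset.card_le_card hsub
        _ ≤ ∑ c ∈ C, (Finset.univ.filter (fun y : α => hammingDist y c ≤ d)).card :=
            Finset.card_biUnion_le
        _ ≤ ∑ c ∈ C, 2 ^ m * t ^ d := Finset.sum_le_sum (fun c _ => hball_card m t d ht c)
        _ = C.card * (2 ^ m * t ^ d) := by rw [Finset.sum_const]; simp
    have h2 : (Finset.univ : Finset α).card = t ^ m := by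
      rw [Finset.card_univ]
      show Fintype.card (Fin m → Fin t) = t ^ m
      simp [Fintype.card_fun]
    rw [h2] at h1
    calc (t:ℝ) ^ m = ((t ^ m : ℕ) : ℝ) := by push_cast; ring
      _ ≤ ((C.card * (2 ^ m * t ^ d) : ℕ) : ℝ) := by exact_mod_cast h1
      _ = (C.card : ℝ) * ((2:ℝ) ^ m * (t:ℝ) ^ d) := by push_cast; ring
  have hMC : M ≤ C.card := by
    have hpos : (0:ℝ) < (2:ℝ) ^ m * (t:ℝ) ^ d := by positivity
    have h3 := le_trans hM hcount
    have h4 := (mul_le_mul_iff_of_pos_right hpos).mp h3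
    exact_mod_cast h4
  obtain ⟨f, hf⟩ : ∃ f : Fin M → α, Function.Injective f ∧ ∀ i, f i ∈ C := by
    have e := C.equivFin
    refine ⟨fun i => (e.symm ⟨i.1, by omega⟩).1, ⟨?_, ?_⟩⟩
    · intro i j hij
      have h3 : (⟨i.1, by omega⟩ : Fin C.card) = ⟨j.1, by omega⟩ :=
        e.symm.injective (Subtype.ext hij)
      exact Fin.ext (congrArg (fun x : Fin C.card => x.1) h3)
    · intro i; exact (e.symm ⟨i.1, by omega⟩).2
  exact ⟨f, fun i j hij => hCGood _ (hf.2 i) _ (hf.2 j) (fun h => hij (hf.1 h))⟩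

lemma abs_gt_of_log_gt {c x : ℝ} (hc : 0 ≤ c) (h : c < Real.log x) : Real.exp c < |x| := by
  have hx0 : x ≠ 0 := by rintro rfl; rw [Real.log_zero] at h; linarith
  have habs : Real.log |x| = Real.log x := Real.log_abs x
  have h2 : Real.exp c < Real.exp (Real.log |x|) := Real.exp_lt_exp.mpr (by rw [habs]; exact h)
  rwa [Real.exp_log (abs_pos.mpr hx0)] at h2

lemma pow12_le_exp {x : ℝ} (hx : 0 ≤ x) : (x/12)^12 ≤ Real.exp x := by
  have h1 : x/12 ≤ Real.exp (x/12) := by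
    have := Real.add_one_le_exp (x/12)
    linarith
  have h2 : (x/12)^12 ≤ (Real.exp (x/12))^12 := by
    apply pow_le_pow_left₀ (by positivity) h1
  calc (x/12)^12 ≤ (Real.exp (x/12))^12 := h2
    _ = Real.exp ((12:ℕ) * (x/12)) := (Real.exp_nat_mul _ 12).symm
    _ = Real.exp x := by congr 1; push_cast; ring

lemma key_ineq {x : ℝ} (hx : 10000 * 12^12 ≤ x) : 10000 * x^11 ≤ Real.exp x := by
  have hx0 : (0:ℝ) ≤ x := le_trans (by positivity) hx
  have h1 : (x/12)^12 ≤ Real.exp x := pow12_le_exp hx0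
  have h2 : 10000 * x^11 ≤ (x/12)^12 := by
    have hx11 : (0:ℝ) ≤ x^11 := by positivity
    have he : (x/12)^12 = x^11 * (x / 12^12) := by ring
    rw [he]
    have h3 : (10000:ℝ) ≤ x / 12^12 := by
      rw [le_div_iff₀ (by norm_num)]
      linarith
    nlinarith
  linarith

lemma e100_ge : (2:ℝ)^100 ≤ Real.exp 100 := by
  calc (2:ℝ)^100 ≤ Real.exp 1 ^ 100 := by
        apply pow_le_pow_left₀ (by norm_num)
        have := Real.add_one_le_exp (1:ℝ); linarith
    _ = Real.exp 100 := by
        rw [← Real.exp_nat_mul]; norm_num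

lemma main_exp_bound {L2 : ℝ} (hL2 : Real.exp (Real.exp 100) ≤ L2) :
    10000 * L2^11 ≤ Real.exp L2 := by
  apply key_ineq
  calc (10000 : ℝ) * 12^12 ≤ 2^100 := by norm_num
    _ ≤ Real.exp 100 := e100_ge
    _ ≤ Real.exp (Real.exp 100) := by
        apply Real.exp_le_exp.mpr
        have := Real.add_one_le_exp (100:ℝ); linarith
    _ ≤ L2 := hL2

lemma mem_vertsOf {N n : ℕ} {W : Fin n → Fin N × Fin N} {v : Fin N} :
    v ∈ vertsOf W ↔ ∃ k, (W k).1 = v ∨ (W k).2 = v := by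
  simp only [vertsOf, Finset.mem_union, Finset.mem_image, Finset.mem_univ, true_and]
  constructor
  · rintro (⟨k, hk⟩ | ⟨k, hk⟩)
    · exact ⟨k, Or.inl hk⟩
    · exact ⟨k, Or.inr hk⟩
  · rintro ⟨k, hk | hk⟩
    · exact Or.inl ⟨k, hk⟩
    · exact Or.inr ⟨k, hk⟩

end DVS


/-- **Statement 3** (Theorem 2.9 of the paper).  For every desired rooted tree
`𝐓 ∈ 𝒯̃_ℵ` there exist `𝙼 = exp(ι (log log ι⁻¹)⁴ ℵ)` pairings `W₁, …, W_𝙼` of `𝐓`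
(each consisting of `ιℵ` pairs of distinct vertices) such that:
(1) all paired vertices lie in `V(𝐓_ι) ∖ {root}`;
(2) each pairing meets every descendant tree with at least `log²(ι⁻¹)` vertices in at
most a `1/log(ι⁻¹)` fraction of its vertices;
(3) distinct pairings have vertex sets with symmetric difference at least `ιℵ/2`;
(4) paired vertices are at tree-distance between `(log log ι⁻¹)^{10}` and
`2(log log ι⁻¹)^{10}`; distinct non-paired vertices of one pairing are at distance at
least `10(log log ι⁻¹)^{10}`; and distinct vertices of two different pairings are at
distance at least `(log log ι⁻¹)^{10}`. -/
theorem desired_vertex_sets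
    (ε : ℝ) (hε0 : 0 < ε) (hε1 : ε < 1)
    (M₀ : ℕ) (hM₀ : 100 ≤ M₀)
    (ι : ℝ) (hι0 : 0 < ι) (hι1 : ι < 1)
    (hι : max (M₀ : ℝ) (max (1 / ε) (1 / Real.log ε⁻¹))
        < Real.log (Real.log (Real.log (Real.log ι⁻¹))))
    (ℵ m : ℕ) (hm : (m : ℝ) = ι * ℵ) (hodd : Odd ℵ)
    (G : SimpleGraph (Fin ℵ)) (r : Fin ℵ) (hG : DesiredTree ι ℵ G r)
    (M : ℕ) (hM : (M : ℝ) ≤ Real.exp (ι * (Real.log (Real.log ι⁻¹)) ^ 4 * ℵ)) :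
    ∃ W : Fin M → (Fin m → Fin ℵ × Fin ℵ),
      (∀ i, IsPairing (W i)) ∧
      -- (1)
      (∀ i, ∀ v ∈ vertsOf (W i), v ∈ iotaFinset ι G r ∧ v ≠ r) ∧
      -- (2)
      (∀ i, ∀ u : Fin ℵ, (Real.log ι⁻¹) ^ 2 ≤ ((descFinset G r u).card : ℝ) →
        (((vertsOf (W i) ∩ descFinset G r u).card : ℝ)
          ≤ ((descFinset G r u).card : ℝ) / Real.log ι⁻¹)) ∧
      -- (3)
      (∀ i j, i ≠ j →
        ι * ℵ / 2 ≤ ((((vertsOf (W i)) \ (vertsOf (W j))) ∪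
            ((vertsOf (W j)) \ (vertsOf (W i)))).card : ℝ)) ∧
      -- (4)
      (∀ i k, (Real.log (Real.log ι⁻¹)) ^ 10 ≤ (G.dist (W i k).1 (W i k).2 : ℝ) ∧
        (G.dist (W i k).1 (W i k).2 : ℝ) ≤ 2 * (Real.log (Real.log ι⁻¹)) ^ 10) ∧
      (∀ i, ∀ u ∈ vertsOf (W i), ∀ v ∈ vertsOf (W i), u ≠ v → ¬ Paired (W i) u v →
        10 * (Real.log (Real.log ι⁻¹)) ^ 10 ≤ (G.dist u v : ℝ)) ∧
      (∀ i j, i ≠ j → ∀ u ∈ vertsOf (W i), ∀ v ∈ vertsOf (W j), u ≠ v →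
        (Real.log (Real.log ι⁻¹)) ^ 10 ≤ (G.dist u v : ℝ)) := by
  classical
  obtain ⟨htree, hdeg, harm, hiotalb, hsibs, u₁, u₂, hu12, hchild, hcard1, hcard2, hns1, hns2⟩ := hG
  have hc := htree.isConnected
  set L1 : ℝ := Real.log ι⁻¹ with hL1def
  set L2 : ℝ := Real.log L1 with hL2def
  have hι0' : (0:ℝ) < ι⁻¹ := by positivity
  have hιinv1 : 1 < ι⁻¹ := (one_lt_inv₀ hι0).mpr hι1
  have hL1pos : 0 < L1 := Real.log_pos hιinv1
  -- the root has at least two neighbours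
  have hAdj1 : G.Adj r u₁ := by
    have h1 : u₁ ∈ childrenFinset G r r := by rw [hchild]; simp
    simp only [childrenFinset, Finset.mem_filter] at h1
    exact h1.2.1
  have hAdj2 : G.Adj r u₂ := by
    have h1 : u₂ ∈ childrenFinset G r r := by rw [hchild]; simp
    simp only [childrenFinset, Finset.mem_filter] at h1
    exact h1.2.1
  have hdeg2 : (2:ℝ) ≤ (degC G r : ℝ) := by
    have hsub : ({u₁, u₂} : Finset (Fin ℵ)) ⊆ Finset.univ.filter (fun w => G.Adj r w) := by
      intro w hw
      simp only [Finset.mem_insert, Finset.mem_singleton] at hw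
      rcases hw with rfl | rfl <;> simp [hAdj1, hAdj2]
    have hcard2' : ({u₁, u₂} : Finset (Fin ℵ)).card = 2 := by
      rw [Finset.card_insert_of_notMem (by simpa using hu12), Finset.card_singleton]
    have hle := Finset.card_le_card hsub
    rw [hcard2'] at hle
    unfold degC
    exact_mod_cast hle
  have hL1sq2 : (2:ℝ) ≤ L1^2 := le_trans hdeg2 (hdeg r)
  -- branch analysis: the quadruple log condition forces L2 to be huge
  have hL4 : (100:ℝ) < Real.log (Real.log L2) := by
    have h100 : (100:ℝ) ≤ (M₀:ℝ) := by exact_mod_cast hM₀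
    calc (100:ℝ) ≤ (M₀:ℝ) := h100
      _ ≤ max ((M₀:ℝ)) (max (1/ε) (1/Real.log ε⁻¹)) := le_max_left _ _
      _ < Real.log (Real.log L2) := hι
  have habs3 : Real.exp 100 < |Real.log L2| := DVS.abs_gt_of_log_gt (by norm_num) hL4
  have h100e : (100:ℝ) + 1 ≤ Real.exp 100 := Real.add_one_le_exp 100
  have hL2big : Real.exp (Real.exp 100) < L2 := by
    rcases abs_cases (Real.log L2) with ⟨heq, hsgn⟩ | ⟨heq, hsgn⟩
    · have h1 : Real.exp 100 < Real.log L2 := by rwa [heq] at habs3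
      have h2 : Real.exp (Real.exp 100) < |L2| := DVS.abs_gt_of_log_gt (by positivity) h1
      rcases abs_cases L2 with ⟨heq2, _⟩ | ⟨heq2, hneg⟩
      · rwa [heq2] at h2
      · exfalso
        have hL1lt1 : L1 < 1 := by
          by_contra hge
          push_neg at hge
          have h3 : 0 ≤ Real.log L1 := Real.log_nonneg hge
          rw [← hL2def] at h3
          linarith
        nlinarith
    · exfalso
      have h1 : Real.log L2 < -(Real.exp 100) := by rw [heq] at habs3; linarith
      have hL2ne : L2 ≠ 0 := by
        rintro h0
        rw [h0, Real.log_zero] at h1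
        have := Real.exp_pos (100:ℝ)
        linarith
      have h2 : Real.log |L2| < -2 := by
        rw [Real.log_abs]
        linarith
      have h3 : |L2| < Real.exp (-2) := by
        have h4 := Real.exp_lt_exp.mpr h2
        rwa [Real.exp_log (abs_pos.mpr hL2ne)] at h4
      have habsL2 : |Real.log L1| < Real.exp (-2) := by rw [← hL2def]; exact h3
      have hexp2 : Real.exp (-2) ≤ 1/3 := by
        have h3e : (3:ℝ) ≤ Real.exp 2 := by
          have := Real.add_one_le_exp (2:ℝ); linarith
        have hpos := Real.exp_pos (2:ℝ)
        rw [Real.exp_neg, inv_le_comm₀ hpos (by norm_num : (0:ℝ) < 1/3)]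
        norm_num
        linarith
      have hlog2 : (0.6931:ℝ) < Real.log 2 := by
        have := Real.log_two_gt_d9; linarith
      have hL1sqlt : L1^2 < 2 := by
        have hL1sq_eq : L1^2 = Real.exp (2 * Real.log L1) := by
          rw [← Real.exp_log (show (0:ℝ) < L1^2 by positivity)]
          congr 1
          rw [Real.log_pow]
          push_cast; ring
        rw [hL1sq_eq]
        have h5 : 2 * Real.log L1 < Real.log 2 := by
          have h6 : Real.log L1 ≤ |Real.log L1| := le_abs_self _
          linarith
        calc Real.exp (2*Real.log L1) < Real.exp (Real.log 2) := Real.exp_lt_exp.mpr h5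
          _ = 2 := Real.exp_log (by norm_num)
      linarith
  -- good branch numerics
  have hL2b : Real.exp (Real.exp 100) ≤ L2 := le_of_lt hL2big
  have hL2_101 : (101:ℝ) ≤ L2 := by
    have h1 := Real.add_one_le_exp (Real.exp 100)
    linarith
  have hL2pos : (0:ℝ) < L2 := by linarith
  have hL2pow : (1:ℝ) ≤ L2 := by linarith
  have hL1eq : Real.exp L2 = L1 := by rw [hL2def]; exact Real.exp_log hL1pos
  have hKEY : 10000 * L2^11 ≤ L1 := by rw [← hL1eq]; exact DVS.main_exp_bound hL2b
  have hL2p11 : (1:ℝ) ≤ L2^11 := one_le_pow₀ hL2pow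
  have hL2p10 : (1:ℝ) ≤ L2^10 := one_le_pow₀ hL2pow
  have hL2p4 : (1:ℝ) ≤ L2^4 := one_le_pow₀ hL2pow
  have hL2p10le11 : L2^10 ≤ L2^11 := pow_le_pow_right₀ hL2pow (by norm_num)
  have hL2p4le11 : L2^4 ≤ L2^11 := pow_le_pow_right₀ hL2pow (by norm_num)
  have hL2le11 : L2 ≤ L2^11 := by
    calc L2 = L2^1 := (pow_one L2).symm
      _ ≤ L2^11 := pow_le_pow_right₀ hL2pow (by norm_num)
  have hL1_40 : (40:ℝ) ≤ L1 := by nlinarith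
  have hιexp : ι⁻¹ = Real.exp L1 := (Real.exp_log hι0').symm
  have hℵpos : 0 < ℵ := by
    have hne : Nonempty (Fin ℵ) := hc.nonempty
    exact Fin.pos_iff_nonempty.mpr hne
  have hm1 : 1 ≤ m := by
    rcases Nat.eq_zero_or_pos m with h0 | h; swap
    · exact h
    exfalso
    rw [h0] at hm
    push_cast at hm
    have hℵr : (0:ℝ) < (ℵ:ℝ) := by exact_mod_cast hℵpos
    nlinarith
  have hℵeq : (ℵ:ℝ) = m * ι⁻¹ := by
    rw [hm]
    field_simp
  -- constants
  set D' : ℕ := ⌈L2^10⌉₊ with hD'def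
  have hD'l : L2^10 ≤ (D':ℝ) := Nat.le_ceil _
  have hD'u : (D':ℝ) ≤ 2 * L2^10 := by
    have h1 := Nat.ceil_lt_add_one (show (0:ℝ) ≤ L2^10 by positivity)
    rw [← hD'def] at h1
    linarith
  have hD'1 : 1 ≤ D' := by
    have h1 : (1:ℝ) ≤ (D':ℝ) := le_trans hL2p10 hD'l
    exact_mod_cast h1
  set S₀ : ℕ := 50 * D' with hS₀def
  set Δ : ℕ := ⌊L1^2⌋₊ with hΔdef
  have hΔ1 : 1 ≤ Δ := by
    apply Nat.le_floor
    push_cast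
    linarith only [hL1sq2]
  have hΔle : (Δ:ℝ) ≤ L1^2 := Nat.floor_le (by positivity)
  have hdegΔ : ∀ x : Fin ℵ, G.degree x ≤ Δ := by
    intro x
    apply Nat.le_floor
    have hdc : G.degree x = degC G x := by
      unfold degC
      rw [← SimpleGraph.neighborFinset_eq_filter]
      rfl
    rw [hdc]
    exact_mod_cast hdeg x
  set t : ℕ := ⌈Real.exp (3 * L2^4)⌉₊ with htdef
  have htl : Real.exp (3*L2^4) ≤ (t:ℝ) := Nat.le_ceil _
  have hexp1t : (1:ℝ) ≤ Real.exp (3*L2^4) := Real.one_le_exp (by positivity)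
  have ht1 : 1 ≤ t := by
    have h1 : (1:ℝ) ≤ (t:ℝ) := le_trans hexp1t htl
    exact_mod_cast h1
  have h2exp1 : (2:ℝ) ≤ Real.exp 1 := by
    have := Real.add_one_le_exp (1:ℝ); linarith
  have htu : (t:ℝ) ≤ Real.exp (4 * L2^4) := by
    have h1 : (t:ℝ) < Real.exp (3*L2^4) + 1 := by
      have := Nat.ceil_lt_add_one (show (0:ℝ) ≤ Real.exp (3*L2^4) by positivity)
      rw [← htdef] at this
      linarith
    have h4 : Real.exp (4*L2^4) = Real.exp (L2^4) * Real.exp (3*L2^4) := by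
      rw [← Real.exp_add]; ring_nf
    have h5 : (2:ℝ) ≤ Real.exp (L2^4) := by
      have h6 := Real.add_one_le_exp (L2^4)
      linarith only [h6, hL2p4]
    nlinarith only [h1, h4, h5, hexp1t, Real.exp_pos (3*L2^4)]
  -- candidate set Z
  set iota : Finset (Fin ℵ) := iotaFinset ι G r with hiotadef
  set Z : Finset (Fin ℵ) := iota.filter (fun v => D' + 1 ≤ G.dist r v) with hZdef
  -- parameters for the greedy construction
  set K : ℝ := ((S₀:ℝ) + 1) * L1 ^ (2 * S₀) with hKdef
  set B : ℝ := 20 * L1 with hBdef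
  set K₁ : ℝ := ((D':ℝ) + 1) * L1 ^ (2 * D') with hK₁def
  have hK0 : (0:ℝ) ≤ K := by rw [hKdef]; positivity
  have hK₁0 : (0:ℝ) ≤ K₁ := by rw [hK₁def]; positivity
  have hB1 : (1:ℝ) ≤ B := by rw [hBdef]; linarith only [hL1_40]
  have hball : ∀ a : Fin ℵ, ((DVS.ballF G a S₀).card : ℝ) ≤ K := by
    intro a
    have h1 := DVS.ball_card hc hΔ1 hdegΔ a S₀
    have h2 : ((DVS.ballF G a S₀).card : ℝ) ≤ ((S₀:ℝ)+1) * (Δ:ℝ)^S₀ := by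
      have := (Nat.cast_le (α := ℝ)).mpr h1
      push_cast at this
      linarith
    calc ((DVS.ballF G a S₀).card : ℝ) ≤ ((S₀:ℝ)+1) * (Δ:ℝ)^S₀ := h2
      _ ≤ ((S₀:ℝ)+1) * (L1^2)^S₀ := by
          apply mul_le_mul_of_nonneg_left (pow_le_pow_left₀ (by positivity) hΔle S₀)
            (by positivity)
      _ = K := by rw [hKdef, ← pow_mul]
  have hL1pow : ∀ k : ℕ, L1 ^ k = Real.exp (k * L2) := by
    intro k; rw [Real.exp_nat_mul, hL1eq]
  -- exponential bounds on K, B, K₁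
  have hS₀r : ((S₀:ℕ):ℝ) = 50 * (D':ℝ) := by rw [hS₀def]; push_cast; ring
  have hS₀le : ((S₀:ℕ):ℝ) ≤ 100 * L2^10 := by rw [hS₀r]; linarith
  have hKexp : K ≤ Real.exp (400 * L2^11) := by
    have h1 : ((S₀:ℝ)+1) ≤ Real.exp (S₀:ℝ) := by linarith [Real.add_one_le_exp (S₀:ℝ)]
    have h2 : L1 ^ (2*S₀) = Real.exp ((2*S₀ : ℕ) * L2) := hL1pow _
    have h4 : K ≤ Real.exp ((S₀:ℝ)) * Real.exp (((2*S₀:ℕ):ℝ) * L2) := by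
      rw [hKdef, h2]
      apply mul_le_mul h1 le_rfl (by positivity) (by positivity)
    rw [← Real.exp_add] at h4
    apply le_trans h4
    apply Real.exp_le_exp.mpr
    have h5 : ((2*S₀:ℕ):ℝ) = 2 * ((S₀:ℕ):ℝ) := by push_cast; ring
    rw [h5]
    have h6' := mul_le_mul_of_nonneg_right hS₀le hL2pos.le
    have h7 : (100:ℝ) * L2^10 * L2 = 100 * L2^11 := by ring
    linarith only [hS₀le, h6', h7, hL2p10le11, hL2p11]
  have hBexp : B ≤ Real.exp (400 * L2^11) := by
    have h1 : B ≤ L1^2 := by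
      rw [hBdef]
      nlinarith only [hL1_40, hL1pos]
    have h2 : L1^2 = Real.exp ((2:ℕ) * L2) := hL1pow 2
    have h3 : ((2:ℕ):ℝ) * L2 ≤ 400 * L2^11 := by
      push_cast
      linarith only [hL2le11, hL2p11]
    calc B ≤ L1^2 := h1
      _ = Real.exp ((2:ℕ) * L2) := h2
      _ ≤ Real.exp (400 * L2^11) := Real.exp_le_exp.mpr h3
  have hK₁exp : K₁ ≤ Real.exp (400 * L2^11) := by
    have h1 : ((D':ℝ)+1) ≤ Real.exp (D':ℝ) := by linarith [Real.add_one_le_exp (D':ℝ)]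
    have h2 : L1 ^ (2*D') = Real.exp ((2*D' : ℕ) * L2) := hL1pow _
    have h4 : K₁ ≤ Real.exp ((D':ℝ)) * Real.exp (((2*D':ℕ):ℝ) * L2) := by
      rw [hK₁def, h2]
      apply mul_le_mul h1 le_rfl (by positivity) (by positivity)
    rw [← Real.exp_add] at h4
    apply le_trans h4
    apply Real.exp_le_exp.mpr
    have h5 : ((2*D':ℕ):ℝ) = 2 * (D':ℝ) := by push_cast; ring
    rw [h5]
    have h6' := mul_le_mul_of_nonneg_right hD'u hL2pos.le
    have h7 : (2:ℝ) * L2^10 * L2 = 2 * L2^11 := by ring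
    linarith only [hD'u, h6', h7, hL2p10le11, hL2p11]
  have hTOT : (t:ℝ)*(K+B) + K₁ ≤ Real.exp (600 * L2^11) := by
    have hsum1 : K + B ≤ Real.exp (400*L2^11 + 1) := by
      have h1 : Real.exp (400*L2^11 + 1) = Real.exp (400*L2^11) * Real.exp 1 := Real.exp_add _ _
      nlinarith only [hKexp, hBexp, h1, h2exp1, Real.exp_pos (400*L2^11)]
    have hprod : (t:ℝ)*(K+B) ≤ Real.exp (4*L2^4 + (400*L2^11 + 1)) := by
      rw [Real.exp_add]
      apply mul_le_mul htu hsum1 (by positivity) (by positivity)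
    have e1 : 4*L2^4 + (400*L2^11+1) ≤ 500*L2^11 := by
      linarith only [hL2p4le11, hL2p11]
    have h1 : (t:ℝ)*(K+B) ≤ Real.exp (500*L2^11) :=
      le_trans hprod (Real.exp_le_exp.mpr e1)
    have h2 : K₁ ≤ Real.exp (500*L2^11) :=
      le_trans hK₁exp (Real.exp_le_exp.mpr (by linarith only [hL2p11]))
    have h3 : Real.exp (500*L2^11) + Real.exp (500*L2^11) ≤ Real.exp (600*L2^11) := by
      have h4 : Real.exp (500*L2^11 + 1) = Real.exp (500*L2^11) * Real.exp 1 := Real.exp_add _ _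
      have h5 : 500*L2^11 + 1 ≤ 600*L2^11 := by linarith only [hL2p11]
      have h6 := Real.exp_le_exp.mpr h5
      nlinarith only [h4, h6, h2exp1, Real.exp_pos (500*L2^11)]
    linarith
  have hRHS : Real.exp (600 * L2^11) * L1^4 < Real.exp L1 := by
    have h1 : L1^4 = Real.exp ((4:ℕ) * L2) := hL1pow 4
    rw [h1, ← Real.exp_add]
    apply Real.exp_lt_exp.mpr
    have h2 : ((4:ℕ):ℝ) * L2 ≤ 4 * L2^11 := by push_cast; linarith only [hL2le11]
    linarith only [h2, hKEY, hL2p11]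
  -- lower bound on |Z|
  have hiota_lb : (ℵ:ℝ)/L1^4 ≤ (iota.card:ℝ) := hiotalb
  have hZcard : (ℵ:ℝ)/L1^4 - K₁ ≤ (Z.card:ℝ) := by
    have hsplit : Z.card + (iota.filter (fun v => ¬ (D' + 1 ≤ G.dist r v))).card
        = iota.card := by
      rw [hZdef]; exact Finset.card_filter_add_card_filter_not _
    have hsub2 : iota.filter (fun v => ¬ (D' + 1 ≤ G.dist r v)) ⊆ DVS.ballF G r D' := by
      intro v hv
      simp only [Finset.mem_filter, not_le] at hv
      simp only [DVS.ballF, Finset.mem_filter, Finset.mem_univ, true_and]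
      omega
    have hneg : ((iota.filter (fun v => ¬ (D' + 1 ≤ G.dist r v))).card : ℝ) ≤ K₁ := by
      have hb1 := DVS.ball_card hc hΔ1 hdegΔ r D'
      have hb2 : ((DVS.ballF G r D').card:ℝ) ≤ ((D':ℝ)+1) * (Δ:ℝ)^D' := by
        have := (Nat.cast_le (α := ℝ)).mpr hb1
        push_cast at this
        linarith
      calc ((iota.filter (fun v => ¬ (D' + 1 ≤ G.dist r v))).card : ℝ)
          ≤ ((DVS.ballF G r D').card : ℝ) := by
            exact_mod_cast Finset.card_le_card hsub2
        _ ≤ ((D':ℝ)+1) * (Δ:ℝ)^D' := hb2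
        _ ≤ ((D':ℝ)+1) * (L1^2)^D' := by
            apply mul_le_mul_of_nonneg_left (pow_le_pow_left₀ (by positivity) hΔle D')
              (by positivity)
        _ = K₁ := by rw [hK₁def, ← pow_mul]
    have hsplit' : (Z.card:ℝ) + ((iota.filter (fun v => ¬ (D' + 1 ≤ G.dist r v))).card:ℝ)
        = (iota.card:ℝ) := by exact_mod_cast congrArg (Nat.cast (R := ℝ)) hsplit
    linarith
  have hmr1 : (1:ℝ) ≤ (m:ℝ) := by exact_mod_cast hm1
  have hℵexp : (ℵ:ℝ) = (m:ℝ) * Real.exp L1 := by rw [hℵeq, hιexp]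
  have hn : ((m*t:ℕ):ℝ) * (K + B) < (Z.card:ℝ) := by
    have h1 : ((m*t:ℕ):ℝ) * (K + B) + K₁ ≤ (m:ℝ) * ((t:ℝ)*(K+B) + K₁) := by
      push_cast
      nlinarith only [hmr1, hK₁0]
    have h2 : (m:ℝ) * ((t:ℝ)*(K+B) + K₁) ≤ (m:ℝ) * Real.exp (600*L2^11) := by
      apply mul_le_mul_of_nonneg_left hTOT (by linarith)
    have h3 : (m:ℝ) * Real.exp (600*L2^11) < (m:ℝ) * (Real.exp L1 / L1^4) := by
      apply mul_lt_mul_of_pos_left _ (by linarith)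
      rw [lt_div_iff₀ (by positivity)]
      exact hRHS
    have h4 : (m:ℝ) * (Real.exp L1 / L1^4) = (ℵ:ℝ)/L1^4 := by
      rw [hℵexp]; ring
    linarith
  -- run the greedy construction
  obtain ⟨T, hTcard, hTZ, hTsep, hTbud⟩ := DVS.greedy (G := G) (r := r) htree Z S₀ (L1^2) B K
    hB1 hK0 hball (m*t) hn
  -- index the sites
  have hTcard' : m * t = T.card := hTcard.symm
  set σ : Fin m × Fin t → Fin ℵ :=
    fun p => (T.equivFin.symm (Fin.cast hTcard' (finProdFinEquiv p))).1 with hσdef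
  have hσT : ∀ p, σ p ∈ T := fun p => (T.equivFin.symm _).2
  have hσinj : Function.Injective σ := by
    intro p q hpq
    have h1 : (T.equivFin.symm (Fin.cast hTcard' (finProdFinEquiv p)))
        = (T.equivFin.symm (Fin.cast hTcard' (finProdFinEquiv q))) := Subtype.ext hpq
    have h2 := T.equivFin.symm.injective h1
    have h3 : finProdFinEquiv p = finProdFinEquiv q := by
      have h4 := congrArg (fun x : Fin T.card => x.1) h2
      simp only [Fin.coe_cast] at h4
      exact Fin.ext h4
    exact finProdFinEquiv.injective h3
  have hσZ : ∀ p, σ p ∈ Z := fun p => hTZ (hσT p)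
  have hσiota : ∀ p, σ p ∈ iota := by
    intro p
    have := hσZ p
    rw [hZdef, Finset.mem_filter] at this
    exact this.1
  have hσdepth : ∀ p, D' + 1 ≤ G.dist r (σ p) := by
    intro p
    have := hσZ p
    rw [hZdef, Finset.mem_filter] at this
    exact this.2
  -- ancestors at distance D'
  have hancex : ∀ z : Fin ℵ, ∃ x : Fin ℵ, z ∈ Z →
      (G.dist r x + D' = G.dist r z ∧ G.dist x z = D' ∧ IsDesc G r x z) := by
    intro z
    by_cases hz : z ∈ Z
    · have hd : D' + 1 ≤ G.dist r z := by
        rw [hZdef, Finset.mem_filter] at hz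
        exact hz.2
      obtain ⟨x, hx1, hx2⟩ := DVS.dist_exists_mid hc r z (G.dist r z - D') (by omega)
      refine ⟨x, fun _ => ⟨by omega, by omega, ?_⟩⟩
      unfold IsDesc
      omega
    · exact ⟨z, fun h => absurd h hz⟩
  choose xf hxf using hancex
  have hx3 : ∀ p, G.dist r (xf (σ p)) + D' = G.dist r (σ p) ∧
      G.dist (xf (σ p)) (σ p) = D' ∧ IsDesc G r (xf (σ p)) (σ p) :=
    fun p => hxf (σ p) (hσZ p)
  have hmem_iota : ∀ v : Fin ℵ, v ∈ iota ↔ L1^2 ≤ ((descFinset G r v).card : ℝ) := by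
    intro v
    rw [hiotadef]
    simp only [iotaFinset, Finset.mem_filter, Finset.mem_univ, true_and]
    exact Iff.rfl
  have hxiota : ∀ p, xf (σ p) ∈ iota := by
    intro p
    have hdsub := DVS.desc_subset (G := G) (r := r) hc (hx3 p).2.2
    have hcards := Finset.card_le_card hdsub
    have hzi := (hmem_iota (σ p)).mp (hσiota p)
    rw [hmem_iota]
    calc L1^2 ≤ ((descFinset G r (σ p)).card : ℝ) := hzi
      _ ≤ ((descFinset G r (xf (σ p))).card : ℝ) := by exact_mod_cast hcards
  have hxner : ∀ p, xf (σ p) ≠ r := by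
    intro p heq
    have h1 := (hx3 p).1
    have h2 := hσdepth p
    rw [heq] at h1
    rw [SimpleGraph.dist_self] at h1
    omega
  have hzner : ∀ p, σ p ≠ r := by
    intro p heq
    have h2 := hσdepth p
    rw [heq] at h2
    rw [SimpleGraph.dist_self] at h2
    omega
  have hsep : ∀ p q, p ≠ q → S₀ < G.dist (σ p) (σ q) :=
    fun p q hpq => hTsep _ (hσT p) _ (hσT q) (fun h => hpq (hσinj h))
  have hfar : ∀ p q, p ≠ q → ∀ a b : Fin ℵ,
      (a = xf (σ p) ∨ a = σ p) → (b = xf (σ q) ∨ b = σ q) → 48 * D' < G.dist a b := by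
    intro p q hpq a b ha hb
    have h1 : G.dist (σ p) a ≤ D' := by
      rcases ha with rfl | rfl
      · rw [SimpleGraph.dist_comm]
        exact le_of_eq (hx3 p).2.1
      · rw [SimpleGraph.dist_self]
        omega
    have h2 : G.dist b (σ q) ≤ D' := by
      rcases hb with rfl | rfl
      · exact le_of_eq (hx3 q).2.1
      · rw [SimpleGraph.dist_self]
        omega
    have ht1 : G.dist (σ p) (σ q) ≤ G.dist (σ p) a + G.dist a (σ q) := hc.dist_triangle
    have ht2 : G.dist a (σ q) ≤ G.dist a b + G.dist b (σ q) := hc.dist_triangle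
    have h3 := hsep p q hpq
    rw [hS₀def] at h3
    omega
  have hne_far : ∀ p q : Fin m × Fin t, p ≠ q → ∀ a b : Fin ℵ,
      (a = xf (σ p) ∨ a = σ p) → (b = xf (σ q) ∨ b = σ q) → a ≠ b := by
    intro p q hpq a b ha hb heq
    have h1 := hfar p q hpq a b ha hb
    rw [heq, SimpleGraph.dist_self] at h1
    omega
  have hxnez : ∀ p, xf (σ p) ≠ σ p := by
    intro p heq
    have h1 := (hx3 p).2.1
    rw [heq, SimpleGraph.dist_self] at h1
    omega
  -- the code
  set d₀ : ℕ := (m + 7) / 8 with hd₀def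
  have hd₀1 : 1 ≤ d₀ := by rw [hd₀def]; omega
  have hd₀m8 : m ≤ 8 * d₀ := by rw [hd₀def]; omega
  have hdle : ((d₀ - 1 : ℕ):ℝ) ≤ (m:ℝ)/8 := by
    have h8 : 8 * (d₀ - 1) ≤ m := by rw [hd₀def]; omega
    have h9 := (Nat.cast_le (α := ℝ)).mpr h8
    push_cast at h9
    linarith
  have hgv : (M:ℝ) * ((2:ℝ)^m * (t:ℝ)^(d₀ - 1)) ≤ (t:ℝ)^m := by
    have hMle : (M:ℝ) ≤ Real.exp (L2^4 * m) := by
      have hrw : ι * L2^4 * (ℵ:ℝ) = L2^4 * m := by rw [hm]; ring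
      rwa [hrw] at hM
    have h2m : (2:ℝ)^m ≤ Real.exp ((m:ℝ)) := by
      calc (2:ℝ)^m ≤ Real.exp 1 ^ m := pow_le_pow_left₀ (by norm_num) h2exp1 m
        _ = Real.exp ((m:ℕ)) := by rw [← Real.exp_nat_mul]; ring_nf
    have htd : (t:ℝ)^(d₀-1) ≤ Real.exp ((m:ℝ)/8 * (4*L2^4)) := by
      calc (t:ℝ)^(d₀-1) ≤ (Real.exp (4*L2^4))^(d₀-1) :=
            pow_le_pow_left₀ (by positivity) htu _
        _ = Real.exp (((d₀-1:ℕ):ℝ) * (4*L2^4)) := by rw [← Real.exp_nat_mul]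
        _ ≤ Real.exp ((m:ℝ)/8 * (4*L2^4)) := by
            apply Real.exp_le_exp.mpr
            have hp : (0:ℝ) ≤ 4*L2^4 := by positivity
            exact mul_le_mul_of_nonneg_right hdle hp
    have hM0 : (0:ℝ) ≤ (M:ℝ) := by positivity
    have hlhs : (M:ℝ) * ((2:ℝ)^m * (t:ℝ)^(d₀-1))
        ≤ Real.exp (L2^4*m) * (Real.exp ((m:ℝ)) * Real.exp ((m:ℝ)/8 * (4*L2^4))) := by
      apply mul_le_mul hMle _ (by positivity) (by positivity)
      apply mul_le_mul h2m htd (by positivity) (by positivity)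
    have hrhs : Real.exp (3 * L2^4 * m) ≤ (t:ℝ)^m := by
      calc Real.exp (3*L2^4*(m:ℝ)) = Real.exp (3*L2^4)^m := by
            rw [← Real.exp_nat_mul]; ring_nf
        _ ≤ (t:ℝ)^m := pow_le_pow_left₀ (by positivity) htl m
    rw [← Real.exp_add, ← Real.exp_add] at hlhs
    refine le_trans hlhs (le_trans (Real.exp_le_exp.mpr ?_) hrhs)
    have hL2le4 : L2 ≤ L2^4 := by
      calc L2 = L2^1 := (pow_one L2).symm
        _ ≤ L2^4 := pow_le_pow_right₀ hL2pow (by norm_num)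
    have hL2_4 : (2:ℝ) ≤ L2^4 := by linarith only [hL2le4, hL2_101]
    have hmr0 : (0:ℝ) ≤ (m:ℝ) := by positivity
    have hprod2 := mul_le_mul_of_nonneg_right hL2_4 hmr0
    linarith only [hprod2]
  obtain ⟨cw, hcw⟩ := DVS.gv_code m t (d₀ - 1) M ht1 hgv
  have hcwd : ∀ i j : Fin M, i ≠ j → d₀ ≤ hammingDist (cw i) (cw j) := by
    intro i j hij
    have := hcw i j hij
    omega
  -- the pairings
  set W : Fin M → Fin m → Fin ℵ × Fin ℵ :=
    fun i k => (xf (σ (k, cw i k)), σ (k, cw i k)) with hWdef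
  have hvert : ∀ (i : Fin M) (v : Fin ℵ), v ∈ vertsOf (W i) ↔
      ∃ k, v = xf (σ (k, cw i k)) ∨ v = σ (k, cw i k) := by
    intro i v
    rw [DVS.mem_vertsOf]
    constructor
    · rintro ⟨k, h | h⟩
      · exact ⟨k, Or.inl h.symm⟩
      · exact ⟨k, Or.inr h.symm⟩
    · rintro ⟨k, h | h⟩
      · exact ⟨k, Or.inl h.symm⟩
      · exact ⟨k, Or.inr h.symm⟩
  have hDltor : L2^10 ≤ (D':ℝ) := hD'l
  refine ⟨W, ?_, ?_, ?_, ?_, ?_, ?_, ?_⟩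
  · -- IsPairing
    intro i
    rintro ⟨k1, b1⟩ ⟨k2, b2⟩ heq
    have hval : (if b1 then (W i k1).1 else (W i k1).2)
        = (if b2 then (W i k2).1 else (W i k2).2) := heq
    simp only [hWdef] at hval
    by_cases hk : k1 = k2
    · subst hk
      cases b1 <;> cases b2
      · rfl
      · exfalso
        simp only [if_true, if_false, Bool.false_eq_true] at hval
        exact hxnez _ hval.symm
      · exfalso
        simp only [if_true, if_false, Bool.false_eq_true] at hval
        exact hxnez _ hval
      · rfl
    · exfalso
      have hpe : (k1, cw i k1) ≠ (k2, cw i k2) := fun h => hk (congrArg Prod.fst h)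
      refine hne_far _ _ hpe _ _ ?_ ?_ hval
      · cases b1 <;> simp
      · cases b2 <;> simp
  · -- (1) membership
    intro i v hv
    rw [hvert] at hv
    obtain ⟨k, hk | hk⟩ := hv
    · subst hk
      exact ⟨hxiota _, hxner _⟩
    · subst hk
      exact ⟨hσiota _, hzner _⟩
  · -- (2) density
    intro i u hu
    have hsub : vertsOf (W i) ∩ descFinset G r u ⊆
        (Finset.univ : Finset (Fin m)).biUnion
          (fun k => ({xf (σ (k, cw i k)), σ (k, cw i k)} : Finset (Fin ℵ))
            ∩ descFinset G r u) := by
      intro v hv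
      rw [Finset.mem_inter] at hv
      obtain ⟨hv1, hv2⟩ := hv
      rw [hvert] at hv1
      obtain ⟨k, hk⟩ := hv1
      rw [Finset.mem_biUnion]
      refine ⟨k, Finset.mem_univ _, ?_⟩
      rw [Finset.mem_inter]
      refine ⟨?_, hv2⟩
      rcases hk with rfl | rfl
      · simp
      · simp
    have hperk : ∀ k : Fin m,
        (({xf (σ (k, cw i k)), σ (k, cw i k)} : Finset (Fin ℵ)) ∩ descFinset G r u).card
        ≤ if σ (k, cw i k) ∈ descFinset G r u then 2 else 0 := by
      intro k
      by_cases hz : σ (k, cw i k) ∈ descFinset G r u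
      · rw [if_pos hz]
        calc (({xf (σ (k, cw i k)), σ (k, cw i k)} : Finset (Fin ℵ))
              ∩ descFinset G r u).card
            ≤ ({xf (σ (k, cw i k)), σ (k, cw i k)} : Finset (Fin ℵ)).card :=
              Finset.card_le_card (Finset.inter_subset_left)
          _ ≤ 2 := by
              apply le_trans (Finset.card_insert_le _ _)
              simp
      · rw [if_neg hz]
        have hx : xf (σ (k, cw i k)) ∉ descFinset G r u := by
          intro hx
          apply hz
          rw [DVS.mem_descFinset] at hx ⊢
          exact DVS.desc_trans hc hx (hx3 _).2.2
        have hemp : ({xf (σ (k, cw i k)), σ (k, cw i k)} : Finset (Fin ℵ))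
            ∩ descFinset G r u = ∅ := by
          rw [Finset.eq_empty_iff_forall_notMem]
          intro v hv
          rw [Finset.mem_inter, Finset.mem_insert, Finset.mem_singleton] at hv
          rcases hv.1 with rfl | rfl
          · exact hx hv.2
          · exact hz hv.2
        rw [hemp]
        simp
    set κ : Finset (Fin m) := Finset.univ.filter
      (fun k => σ (k, cw i k) ∈ descFinset G r u) with hκ
    have hcount : (vertsOf (W i) ∩ descFinset G r u).card ≤ 2 * κ.card := by
      calc (vertsOf (W i) ∩ descFinset G r u).card
          ≤ ((Finset.univ : Finset (Fin m)).biUnion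
              (fun k => ({xf (σ (k, cw i k)), σ (k, cw i k)} : Finset (Fin ℵ))
                ∩ descFinset G r u)).card := Finset.card_le_card hsub
        _ ≤ ∑ k ∈ Finset.univ,
              (({xf (σ (k, cw i k)), σ (k, cw i k)} : Finset (Fin ℵ))
                ∩ descFinset G r u).card := Finset.card_biUnion_le
        _ ≤ ∑ k ∈ Finset.univ,
              (if σ (k, cw i k) ∈ descFinset G r u then 2 else 0) :=
            Finset.sum_le_sum (fun k _ => hperk k)
        _ = ∑ k ∈ κ, 2 := (Finset.sum_filter _ _).symm
        _ = 2 * κ.card := by rw [Finset.sum_const]; ring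
    have hκT : κ.card ≤ (T ∩ descFinset G r u).card := by
      apply Finset.card_le_card_of_injOn (fun k => σ (k, cw i k))
      · intro k hk
        rw [hκ, Finset.mem_coe, Finset.mem_filter] at hk
        exact Finset.mem_inter.mpr ⟨hσT _, hk.2⟩
      · intro k1 h1 k2 h2 he
        have h3 := hσinj he
        exact congrArg Prod.fst h3
    have hbud := hTbud u hu
    have hc1 : ((vertsOf (W i) ∩ descFinset G r u).card : ℝ) ≤ 2 * ((T ∩ descFinset G r u).card : ℝ) := by
      have h4 : (vertsOf (W i) ∩ descFinset G r u).card ≤ 2 * (T ∩ descFinset G r u).card :=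
        le_trans hcount (by omega)
      exact_mod_cast h4
    have hca : L1^2 ≤ ((descFinset G r u).card:ℝ) := hu
    have hdivi : 2 * (((descFinset G r u).card : ℝ)/B + 1)
        ≤ ((descFinset G r u).card : ℝ) / L1 := by
      rw [hBdef]
      have h9 : ((descFinset G r u).card:ℝ)/L1
          - 2*(((descFinset G r u).card:ℝ)/(20*L1))
          = 9*((descFinset G r u).card:ℝ)/(10*L1) := by
        ring
      have h10 : (2:ℝ) ≤ 9*((descFinset G r u).card:ℝ)/(10*L1) := by
        rw [le_div_iff₀ (by positivity)]
        nlinarith only [hca, hL1_40, hL1pos]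
      linarith only [h9, h10]
    linarith only [hc1, hbud, hdivi]
  · -- (3) symmetric difference
    intro i j hij
    have hgen : ∀ (a b : Fin M), a ≠ b →
        2 * hammingDist (cw a) (cw b)
          ≤ ((vertsOf (W a)) \ (vertsOf (W b))).card := by
      intro a b hab
      set Dk : Finset (Fin m) := Finset.univ.filter (fun k => cw a k ≠ cw b k) with hDk
      have hham : hammingDist (cw a) (cw b) = Dk.card := rfl
      have hSisub : Dk.biUnion
          (fun k => ({xf (σ (k, cw a k)), σ (k, cw a k)} : Finset (Fin ℵ)))
          ⊆ (vertsOf (W a)) \ (vertsOf (W b)) := by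
        intro v hv
        rw [Finset.mem_biUnion] at hv
        obtain ⟨k, hk, hv⟩ := hv
        rw [Finset.mem_insert, Finset.mem_singleton] at hv
        rw [Finset.mem_sdiff]
        constructor
        · rw [hvert]
          exact ⟨k, hv⟩
        · intro hvB
          rw [hvert] at hvB
          obtain ⟨k', hk'⟩ := hvB
          by_cases hpe : (k, cw a k) = (k', cw b k')
          · rw [hDk, Finset.mem_filter] at hk
            have h1 : k = k' := congrArg Prod.fst hpe
            have h2 : cw a k = cw b k' := congrArg Prod.snd hpe
            rw [← h1] at h2
            exact hk.2 h2
          · exact hne_far _ _ hpe v v hv hk' rfl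
      have hSicard : (Dk.biUnion
          (fun k => ({xf (σ (k, cw a k)), σ (k, cw a k)} : Finset (Fin ℵ)))).card
          = 2 * Dk.card := by
        rw [Finset.card_biUnion]
        · have hpair : ∀ k, ({xf (σ (k, cw a k)), σ (k, cw a k)} : Finset (Fin ℵ)).card = 2 := by
            intro k
            rw [Finset.card_insert_of_notMem (by simpa using hxnez (k, cw a k)),
              Finset.card_singleton]
          rw [Finset.sum_congr rfl (fun k _ => hpair k), Finset.sum_const]
          ring
        · intro k1 h1 k2 h2 hne
          rw [Function.onFun, Finset.disjoint_left]
          intro x hx1 hx2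
          rw [Finset.mem_insert, Finset.mem_singleton] at hx1 hx2
          have hpe : (k1, cw a k1) ≠ (k2, cw a k2) := fun h => hne (congrArg Prod.fst h)
          exact hne_far _ _ hpe x x hx1 hx2 rfl
      calc 2 * hammingDist (cw a) (cw b) = 2 * Dk.card := by rw [hham]
        _ = (Dk.biUnion
            (fun k => ({xf (σ (k, cw a k)), σ (k, cw a k)} : Finset (Fin ℵ)))).card :=
            hSicard.symm
        _ ≤ ((vertsOf (W a)) \ (vertsOf (W b))).card := Finset.card_le_card hSisub
    have h1 := hgen i j hij
    have h2 := hgen j i hij.symm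
    have hdisj2 : Disjoint ((vertsOf (W i)) \ (vertsOf (W j)))
        ((vertsOf (W j)) \ (vertsOf (W i))) := by
      rw [Finset.disjoint_left]
      intro x hx1 hx2
      rw [Finset.mem_sdiff] at hx1 hx2
      exact hx2.2 hx1.1
    have hcu : (((vertsOf (W i)) \ (vertsOf (W j))) ∪
        ((vertsOf (W j)) \ (vertsOf (W i)))).card
        = ((vertsOf (W i)) \ (vertsOf (W j))).card
          + ((vertsOf (W j)) \ (vertsOf (W i))).card :=
      Finset.card_union_of_disjoint hdisj2
    have hham_symm : hammingDist (cw j) (cw i) = hammingDist (cw i) (cw j) :=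
      hammingDist_comm _ _
    have hd := hcwd i j hij
    have htotal : 4 * d₀ ≤ (((vertsOf (W i)) \ (vertsOf (W j))) ∪
        ((vertsOf (W j)) \ (vertsOf (W i)))).card := by
      rw [hcu]
      rw [hham_symm] at h2
      omega
    have hιℵ : ι * (ℵ:ℝ) = (m:ℝ) := hm.symm
    rw [hιℵ]
    have hcast : ((4 * d₀ : ℕ):ℝ) ≤ ((((vertsOf (W i)) \ (vertsOf (W j))) ∪
        ((vertsOf (W j)) \ (vertsOf (W i)))).card : ℝ) := by exact_mod_cast htotal
    have hd8 : (m:ℝ) ≤ 8 * (d₀:ℝ) := by exact_mod_cast hd₀m8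
    push_cast at hcast
    linarith only [hcast, hd8]
  · -- (4a) paired distances
    intro i k
    have h1 := (hx3 (k, cw i k)).2.1
    have hfst : (W i k).1 = xf (σ (k, cw i k)) := rfl
    have hsnd : (W i k).2 = σ (k, cw i k) := rfl
    rw [hfst, hsnd, h1]
    constructor
    · exact hD'l
    · linarith only [hD'u]
  · -- (4b) non-paired same-pairing distances
    intro i u hu v hv hne hnp
    rw [hvert] at hu hv
    obtain ⟨k1, hk1⟩ := hu
    obtain ⟨k2, hk2⟩ := hv
    by_cases hk : k1 = k2
    · exfalso
      subst hk
      apply hnp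
      rcases hk1 with rfl | rfl <;> rcases hk2 with rfl | rfl
      · exact absurd rfl hne
      · exact ⟨k1, Or.inl rfl⟩
      · exact ⟨k1, Or.inr rfl⟩
      · exact absurd rfl hne
    · have hpe : (k1, cw i k1) ≠ (k2, cw i k2) := fun h => hk (congrArg Prod.fst h)
      have h1 := hfar _ _ hpe u v hk1 hk2
      have h2 : (48:ℝ) * (D':ℝ) ≤ (G.dist u v : ℝ) := by
        have h3 : (48 * D' : ℕ) ≤ G.dist u v := le_of_lt h1
        exact_mod_cast h3
      have h3 : (10:ℝ) * L2^10 ≤ 48 * (D':ℝ) := by linarith only [hD'l, hL2p10]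
      linarith only [h2, h3]
  · -- (4c) cross-pairing distances
    intro i j hij u hu v hv hne
    rw [hvert] at hu hv
    obtain ⟨k1, hk1⟩ := hu
    obtain ⟨k2, hk2⟩ := hv
    by_cases hpe : (k1, cw i k1) = (k2, cw j k2)
    · have hdist : G.dist u v = D' := by
        rcases hk1 with rfl | rfl <;> rcases hk2 with rfl | rfl
        · exact absurd (by rw [hpe]) hne
        · rw [hpe]
          exact (hx3 _).2.1
        · rw [hpe, SimpleGraph.dist_comm]
          exact (hx3 _).2.1
        · exact absurd (by rw [hpe]) hne
      rw [hdist]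
      exact hD'l
    · have h1 := hfar _ _ hpe u v hk1 hk2
      have h2 : (48:ℝ) * (D':ℝ) ≤ (G.dist u v : ℝ) := by
        have h3 : (48 * D' : ℕ) ≤ G.dist u v := le_of_lt h1
        exact_mod_cast h3
      linarith only [h2, hD'l, hL2p10]
end
end

section
/- Let l ≥ 1 be an integer, let σ₀, σ_l ∈ {−1,+1} be fixed, and let σ₁,…,σ_{l−1} be i.i.d. uniform random signs in {−1,+1}. Then for all real numbers a₁,…,a_l and b₁,…,b_l, 𝔼[∏_{i=1}^{l}(a_i + b_i·σ_{i−1}σ_i)] = ∏_{i=1}^{l}a_i + σ₀σ_l·∏_{i=1}^{l}b_i. -/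
open Finset

/-- The spin configuration along a path with `l + 1` vertices: the endpoint spins
`σ0` (at vertex `0`) and `σl` (at vertex `l`) are fixed, while the interior spins are
determined by the Boolean configuration `g` (mapped to `±1`). -/
noncomputable def pathSpin (l : ℕ) (σ0 σl : ℝ) (g : Fin (l + 1) → Bool)
    (j : Fin (l + 1)) : ℝ :=
  if j = 0 then σ0 else if j = Fin.last l then σl else (if g j then 1 else -1)

lemma telescope_spin (t : ℕ → ℝ) (ht : ∀ n, t n * t n = 1) :
    ∀ k, ∏ i ∈ Finset.range k, (t i * t (i + 1)) = t 0 * t k := by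
  intro k
  induction k with
  | zero => simpa using (ht 0).symm
  | succ k ih =>
      rw [Finset.prod_range_succ, ih]
      calc t 0 * t k * (t k * t (k+1)) = t 0 * (t k * t k) * t (k+1) := by ring
        _ = t 0 * t (k+1) := by rw [ht k]; ring


lemma pathSpin_sq (l : ℕ) (σ0 σl : ℝ)
    (h0 : σ0 = 1 ∨ σ0 = -1) (hσl : σl = 1 ∨ σl = -1)
    (g : Fin (l + 1) → Bool) (j : Fin (l + 1)) :
    pathSpin l σ0 σl g j * pathSpin l σ0 σl g j = 1 := by
  unfold pathSpin
  split_ifs <;> first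
    | (rcases h0 with h | h <;> rw [h] <;> norm_num)
    | (rcases hσl with h | h <;> rw [h] <;> norm_num)
    | norm_num


lemma prod_edges (l : ℕ) (hl : 1 ≤ l) (σ0 σl : ℝ)
    (h0 : σ0 = 1 ∨ σ0 = -1) (hσl : σl = 1 ∨ σl = -1)
    (g : Fin (l + 1) → Bool) :
    ∏ i : Fin l, (pathSpin l σ0 σl g i.castSucc * pathSpin l σ0 σl g i.succ)
      = σ0 * σl := by
  set t : ℕ → ℝ := fun n => if h : n < l + 1 then pathSpin l σ0 σl g ⟨n, h⟩ else 1 with hT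
  have ht : ∀ n, t n * t n = 1 := by
    intro n
    by_cases h : n < l + 1
    · simp only [hT, dif_pos h]
      exact pathSpin_sq l σ0 σl h0 hσl g ⟨n, h⟩
    · simp only [hT, dif_neg h, mul_one]
  have h1 : ∀ i : Fin l, pathSpin l σ0 σl g i.castSucc * pathSpin l σ0 σl g i.succ
      = t (i : ℕ) * t ((i : ℕ) + 1) := by
    intro i
    have hi1 : (i : ℕ) < l + 1 := by omega
    have hi2 : (i : ℕ) + 1 < l + 1 := by omega
    simp only [hT, dif_pos hi1, dif_pos hi2]
    congr 1
  rw [Finset.prod_congr rfl (fun i _ => h1 i),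
    Fin.prod_univ_eq_prod_range (fun n => t n * t (n + 1)) l,
    telescope_spin t ht l]
  have e0 : t 0 = σ0 := by
    simp only [hT, dif_pos (by omega : 0 < l + 1)]
    simp [pathSpin, Fin.ext_iff]
  have el : t l = σl := by
    simp only [hT, dif_pos (by omega : l < l + 1)]
    rw [pathSpin, if_neg (by simp [Fin.ext_iff]; omega), if_pos (by simp [Fin.ext_iff, Fin.last])]
  rw [e0, el]

lemma exists_adj {l : ℕ} (S : Finset (Fin l)) (hne : S ≠ ∅) (hnu : S ≠ univ) :
    ∃ k : Fin l, ∃ hk : (k : ℕ) + 1 < l, ¬ ((k ∈ S) ↔ (⟨(k : ℕ) + 1, hk⟩ ∈ S)) := by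
  by_contra hc
  push_neg at hc
  have hstep : ∀ k : Fin l, ∀ hk : (k : ℕ) + 1 < l, (k ∈ S ↔ (⟨(k:ℕ)+1, hk⟩ ∈ S)) := by
    intro k hk
    exact hc k hk
  have hl : 0 < l := by
    rcases Finset.nonempty_of_ne_empty hne with ⟨x, _⟩
    exact x.pos
  have hall : ∀ n (hn : n < l), ((⟨n, hn⟩ : Fin l) ∈ S ↔ (⟨0, hl⟩ : Fin l) ∈ S) := by
    intro n
    induction n with
    | zero => intro hn; rfl
    | succ m ih =>
        intro hn
        have hm : m < l := by omega
        have := hstep ⟨m, hm⟩ (by simpa using hn)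
        exact this.symm.trans (ih hm)
  rcases Finset.nonempty_of_ne_empty hne with ⟨x, hx⟩
  have : ∃ y : Fin l, y ∉ S := by
    by_contra h
    push_neg at h
    exact hnu (Finset.eq_univ_of_forall h)
  rcases this with ⟨y, hy⟩
  have hx' := (hall x.1 x.2).mp (by simpa using hx)
  have hy' := (hall y.1 y.2)
  exact hy (by simpa using hy'.mpr hx')

lemma pathSpin_update (l : ℕ) (σ0 σl : ℝ) (g : Fin (l + 1) → Bool)
    (j : Fin (l + 1)) (hj0 : j ≠ 0) (hjl : j ≠ Fin.last l) (v : Fin (l + 1)) :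
    pathSpin l σ0 σl (Function.update g j (!(g j))) v
      = if v = j then - pathSpin l σ0 σl g v else pathSpin l σ0 σl g v := by
  unfold pathSpin
  by_cases hv : v = j
  · subst hv
    rw [if_pos rfl, if_neg hj0, if_neg hjl, if_neg hj0, if_neg hjl,
      Function.update_self]
    cases g v <;> simp
  · rw [if_neg hv, Function.update_of_ne hv]


lemma flip_sum_zero (l : ℕ) (σ0 σl : ℝ) (S : Finset (Fin l))
    (k : Fin l) (hk : (k : ℕ) + 1 < l)
    (hxor : ¬ ((k ∈ S) ↔ (⟨(k : ℕ) + 1, hk⟩ ∈ S))) :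
    ∑ g : Fin (l + 1) → Bool,
      ∏ i ∈ S, (pathSpin l σ0 σl g i.castSucc * pathSpin l σ0 σl g i.succ) = 0 := by
  classical
  set k₂ : Fin l := ⟨(k : ℕ) + 1, hk⟩ with hk₂
  set j : Fin (l + 1) := ⟨(k : ℕ) + 1, by omega⟩ with hj
  have hj0 : j ≠ 0 := by simp [hj, Fin.ext_iff]
  have hjl : j ≠ Fin.last l := by simp [hj, Fin.ext_iff]; omega
  set F : (Fin (l + 1) → Bool) → ℝ := fun g =>
    ∏ i ∈ S, (pathSpin l σ0 σl g i.castSucc * pathSpin l σ0 σl g i.succ) with hF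
  set flip : (Fin (l + 1) → Bool) → (Fin (l + 1) → Bool) := fun g =>
    Function.update g j (!(g j)) with hflipdef
  have hinv : Function.Involutive flip := by
    intro g
    funext v
    by_cases hv : v = j
    · subst hv; simp [hflipdef, Function.update_self]
    · simp [hflipdef, Function.update_of_ne hv]
  have hflip : ∀ g, F (flip g) = - F g := by
    intro g
    have hfac : ∀ i ∈ S,
        pathSpin l σ0 σl (flip g) i.castSucc * pathSpin l σ0 σl (flip g) i.succ
          = ((if i = k₂ then (-1 : ℝ) else 1) * (if i = k then (-1 : ℝ) else 1))
            * (pathSpin l σ0 σl g i.castSucc * pathSpin l σ0 σl g i.succ) := by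
      intro i _
      rw [hflipdef]
      rw [pathSpin_update l σ0 σl g j hj0 hjl, pathSpin_update l σ0 σl g j hj0 hjl]
      have e1 : (i.castSucc = j) ↔ i = k₂ := by
        simp [Fin.ext_iff, hj, hk₂]
      have e2 : (i.succ = j) ↔ i = k := by
        simp [Fin.ext_iff, hj]
      simp only [e1, e2]
      split_ifs <;> ring
    rw [hF]
    simp only []
    rw [Finset.prod_congr rfl hfac, Finset.prod_mul_distrib, Finset.prod_mul_distrib,
      Finset.prod_ite_eq' S k₂ (fun _ => (-1 : ℝ)),
      Finset.prod_ite_eq' S k (fun _ => (-1 : ℝ))]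
    by_cases h1 : k ∈ S <;> by_cases h2 : k₂ ∈ S <;>
      simp [h1, h2] at hxor ⊢ <;> ring
  have h3 : ∑ g : Fin (l + 1) → Bool, F (flip g) = ∑ g : Fin (l + 1) → Bool, F g :=
    Fintype.sum_bijective flip hinv.bijective _ F (fun x => rfl)
  have h2 : ∑ g : Fin (l + 1) → Bool, F (flip g) = - ∑ g : Fin (l + 1) → Bool, F g := by
    rw [Finset.sum_congr rfl (fun g _ => hflip g)]
    exact Finset.sum_neg_distrib _
  have := h3.symm.trans h2
  linarith [this]

lemma key_orth (l : ℕ) (hl : 1 ≤ l) (σ0 σl : ℝ)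
    (h0 : σ0 = 1 ∨ σ0 = -1) (hσl : σl = 1 ∨ σl = -1) (S : Finset (Fin l)) :
    ∑ g : Fin (l + 1) → Bool,
      ∏ i ∈ S, (pathSpin l σ0 σl g i.castSucc * pathSpin l σ0 σl g i.succ)
    = if S = ∅ then (2 : ℝ) ^ (l + 1)
      else if S = univ then (2 : ℝ) ^ (l + 1) * (σ0 * σl) else 0 := by
  by_cases hS : S = ∅
  · subst hS
    simp [Finset.card_univ]
  by_cases hU : S = univ
  · subst hU
    rw [if_neg hS, if_pos rfl]
    rw [Finset.sum_congr rfl (fun g _ => prod_edges l hl σ0 σl h0 hσl g)]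
    simp [Finset.card_univ, mul_comm]
  · rw [if_neg hS, if_neg hU]
    obtain ⟨k, hk, hxor⟩ := exists_adj S hS hU
    exact flip_sum_zero l σ0 σl S k hk hxor


/-- **Statement 9** (expectation identity along a self-avoiding path).
Let `l ≥ 1`, let `σ0, σl ∈ {−1,+1}` be fixed endpoint spins and let the interior spins
`σ1, …, σ_{l−1}` be i.i.d. uniform random signs.  Then for all reals `a i`, `b i`
(`i = 1, …, l`),
`𝔼[∏ i (a i + b i · σ_{i−1} σ_i)] = ∏ i a i + σ0 σl · ∏ i b i`.
The expectation over the interior spins is realized as the normalized sum over all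
Boolean configurations `g : Fin (l+1) → Bool` (the values of `g` at the two endpoints
are unused dummies, whence the normalization `2 ^ (l+1)`). -/
theorem chain_expectation
    (l : ℕ) (hl : 1 ≤ l) (σ0 σl : ℝ)
    (h0 : σ0 = 1 ∨ σ0 = -1) (hσl : σl = 1 ∨ σl = -1)
    (a b : Fin l → ℝ) :
    (1 / 2 ^ (l + 1)) *
      ∑ g : Fin (l + 1) → Bool,
        ∏ i : Fin l,
          (a i + b i * pathSpin l σ0 σl g i.castSucc * pathSpin l σ0 σl g i.succ)
      = ∏ i, a i + σ0 * σl * ∏ i, b i := by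
  classical
  have hexp : ∀ g : Fin (l + 1) → Bool,
      ∏ i : Fin l,
          (a i + b i * pathSpin l σ0 σl g i.castSucc * pathSpin l σ0 σl g i.succ)
      = ∑ t ∈ (univ : Finset (Fin l)).powerset,
          (∏ i ∈ t, a i) * ((∏ i ∈ univ \ t, b i) *
            ∏ i ∈ univ \ t,
              (pathSpin l σ0 σl g i.castSucc * pathSpin l σ0 σl g i.succ)) := by
    intro g
    rw [Finset.prod_add]
    refine Finset.sum_congr rfl (fun t _ => ?_)
    rw [← Finset.prod_mul_distrib]
    congr 1
    exact Finset.prod_congr rfl (fun i _ => by ring)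
  rw [Finset.sum_congr rfl (fun g _ => hexp g), Finset.sum_comm]
  have hterm : ∀ t ∈ (univ : Finset (Fin l)).powerset,
      ∑ g : Fin (l + 1) → Bool,
        (∏ i ∈ t, a i) * ((∏ i ∈ univ \ t, b i) *
          ∏ i ∈ univ \ t,
            (pathSpin l σ0 σl g i.castSucc * pathSpin l σ0 σl g i.succ))
      = (∏ i ∈ t, a i) * ((∏ i ∈ univ \ t, b i) *
          (if univ \ t = ∅ then (2 : ℝ) ^ (l + 1)
            else if univ \ t = univ then (2 : ℝ) ^ (l + 1) * (σ0 * σl) else 0)) := by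
    intro t _
    rw [← Finset.mul_sum, ← Finset.mul_sum,
      key_orth l hl σ0 σl h0 hσl (univ \ t)]
  rw [Finset.sum_congr rfl hterm]
  have hne : (univ : Finset (Fin l)).Nonempty := by
    have : Nonempty (Fin l) := ⟨⟨0, by omega⟩⟩
    exact Finset.univ_nonempty
  have hnequ : (∅ : Finset (Fin l)) ≠ univ := by
    intro h
    exact absurd h.symm (Finset.nonempty_iff_ne_empty.mp hne)
  have hsub : ({∅, univ} : Finset (Finset (Fin l))) ⊆ (univ : Finset (Fin l)).powerset := by
    intro x hx
    simp only [Finset.mem_insert, Finset.mem_singleton] at hx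
    rcases hx with h | h <;> subst h <;> simp
  rw [← Finset.sum_subset hsub (fun t _ ht => ?_)]
  · rw [Finset.sum_pair hnequ]
    have h1 : (univ : Finset (Fin l)) \ ∅ = univ := by simp
    have h2 : (univ : Finset (Fin l)) \ univ = ∅ := by simp
    rw [h1, h2, if_neg (Ne.symm hnequ), if_pos rfl, if_pos rfl]
    simp only [Finset.prod_empty]
    have h2pow : (2 : ℝ) ^ (l + 1) ≠ 0 := by positivity
    field_simp
    ring
  · -- t not ∅ or univ : the summand vanishes
    have hd1 : (univ : Finset (Fin l)) \ t ≠ ∅ := by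
      intro h
      apply ht
      simp only [Finset.mem_insert, Finset.mem_singleton]
      exact Or.inr (Finset.univ_subset_iff.mp (Finset.sdiff_eq_empty_iff_subset.mp h))
    have hd2 : (univ : Finset (Fin l)) \ t ≠ univ := by
      intro h
      apply ht
      simp only [Finset.mem_insert, Finset.mem_singleton]
      left
      refine Finset.eq_empty_of_forall_notMem (fun x hx => ?_)
      have hx' : x ∈ (univ : Finset (Fin l)) \ t := h.symm ▸ Finset.mem_univ x
      exact (Finset.mem_sdiff.mp hx').2 hx
    rw [if_neg hd1, if_neg hd2]
    ring
end

section
/- Let H be a graph with vertex set contained in [n], and let L₁,…,L_k be self-avoiding paths with EndP(L_i) ⊂ V(H) and |E(L_i)| ≤ M for every i. Set S = H ∪ L₁ ∪ ⋯ ∪ L_k. Then the edge set E(S)∖E(H) can be decomposed into t self-avoiding paths P₁,…,P_t such that: (1) V(P_j) ∩ (V(H) ∪ ⋃_{k'<j}V(P_{k'}) ∪ 𝓛(S)) = EndP(P_j) for all 1 ≤ j ≤ t; (2) |E(P_i)| ≤ M for all i; (3) t = τ(S) − τ(H). -/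
open Finset
open scoped Classical
noncomputable section

/-- The degree of `v` in a simple graph, as a `Finset` count. -/
def degF {n : ℕ} (G : SimpleGraph (Fin n)) (v : Fin n) : ℕ :=
  (Finset.univ.filter (fun w => G.Adj v w)).card

/-- The support of a simple graph (non-isolated vertices), as a `Finset`. -/
def supportF {n : ℕ} (G : SimpleGraph (Fin n)) : Finset (Fin n) :=
  Finset.univ.filter (fun v => v ∈ G.support)

/-- The edge set of a simple graph, as a `Finset` of unordered pairs. -/
def edgesF {n : ℕ} (G : SimpleGraph (Fin n)) : Finset (Sym2 (Fin n)) :=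
  Finset.univ.filter (fun e => e ∈ G.edgeSet)

/-- The set of leaves (degree-1 vertices) of a simple graph. -/
def leavesF {n : ℕ} (G : SimpleGraph (Fin n)) : Finset (Fin n) :=
  Finset.univ.filter (fun v => degF G v = 1)

/-- The edges traced by a walk `q` through `L + 1` vertices. -/
def pathEdges {n L : ℕ} (q : Fin (L + 1) → Fin n) : Finset (Sym2 (Fin n)) :=
  Finset.univ.image (fun i : Fin L => s(q i.castSucc, q i.succ))

/-- The vertices visited by a walk. -/
def pathVerts {n L : ℕ} (q : Fin (L + 1) → Fin n) : Finset (Fin n) :=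
  Finset.univ.image q

/-- The graph consisting of the edges traced by a walk. -/
def pathG {n L : ℕ} (q : Fin (L + 1) → Fin n) : SimpleGraph (Fin n) :=
  SimpleGraph.fromEdgeSet (↑(pathEdges q))

/- N-indexed versions -/
def pathEdgesN {n : ℕ} (Q : ℕ → Fin n) (L : ℕ) : Finset (Sym2 (Fin n)) :=
  (Finset.range L).image (fun i => s(Q i, Q (i+1)))

def pathVertsN {n : ℕ} (Q : ℕ → Fin n) (L : ℕ) : Finset (Fin n) :=
  (Finset.range (L+1)).image Q

def pathGN {n : ℕ} (Q : ℕ → Fin n) (L : ℕ) : SimpleGraph (Fin n) :=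
  SimpleGraph.fromEdgeSet (↑(pathEdgesN Q L))

variable {n : ℕ}

lemma mem_edgesF {G : SimpleGraph (Fin n)} {e} : e ∈ edgesF G ↔ e ∈ G.edgeSet := by
  simp [edgesF]

lemma mem_supportF {G : SimpleGraph (Fin n)} {v} : v ∈ supportF G ↔ ∃ w, G.Adj v w := by
  simp [supportF, SimpleGraph.mem_support]

lemma edgesF_sup {G G' : SimpleGraph (Fin n)} : edgesF (G ⊔ G') = edgesF G ∪ edgesF G' := by
  ext e; simp [mem_edgesF, SimpleGraph.edgeSet_sup]

lemma edgesF_mono {G G' : SimpleGraph (Fin n)} (h : G ≤ G') : edgesF G ⊆ edgesF G' := by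
  intro e he; rw [mem_edgesF] at *; exact SimpleGraph.edgeSet_mono h he

lemma supportF_sup {G G' : SimpleGraph (Fin n)} :
    supportF (G ⊔ G') = supportF G ∪ supportF G' := by
  ext v; simp [mem_supportF, SimpleGraph.sup_adj, exists_or, or_and_right, exists_or]

lemma degF_mono {G G' : SimpleGraph (Fin n)} (h : G ≤ G') (v : Fin n) :
    degF G v ≤ degF G' v := by
  apply Finset.card_le_card
  intro w hw
  simp only [mem_filter, mem_univ, true_and] at *
  exact h hw

lemma two_le_degF {G : SimpleGraph (Fin n)} {v a b : Fin n} (hab : a ≠ b)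
    (ha : G.Adj v a) (hb : G.Adj v b) : 2 ≤ degF G v := by
  have : ({a, b} : Finset (Fin n)) ⊆ Finset.univ.filter (fun w => G.Adj v w) := by
    intro x hx
    simp only [mem_insert, mem_singleton] at hx
    rcases hx with rfl | rfl <;> simp [ha, hb]
  calc 2 = ({a, b} : Finset (Fin n)).card := by rw [Finset.card_insert_of_notMem (by simpa using hab), Finset.card_singleton]
  _ ≤ _ := Finset.card_le_card this
  _ = degF G v := rfl

lemma mem_pathEdgesN {Q : ℕ → Fin n} {L : ℕ} {e} :
    e ∈ pathEdgesN Q L ↔ ∃ i < L, e = s(Q i, Q (i+1)) := by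
  simp [pathEdgesN, eq_comm]

lemma mem_pathVertsN {Q : ℕ → Fin n} {L : ℕ} {v} :
    v ∈ pathVertsN Q L ↔ ∃ i ≤ L, Q i = v := by
  simp [pathVertsN, Nat.lt_succ_iff]

lemma pathEdges_eq_N {L : ℕ} (Q : ℕ → Fin n) :
    pathEdges (fun a : Fin (L+1) => Q ↑a) = pathEdgesN Q L := by
  ext e
  simp only [pathEdges, mem_image, mem_univ, true_and, mem_pathEdgesN]
  constructor
  · rintro ⟨i, rfl⟩
    exact ⟨i, i.isLt, by simp [Fin.coe_castSucc, Fin.val_succ]⟩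
  · rintro ⟨i, hi, rfl⟩
    exact ⟨⟨i, hi⟩, by simp [Fin.coe_castSucc, Fin.val_succ]⟩

lemma pathVerts_eq_N {L : ℕ} (Q : ℕ → Fin n) :
    pathVerts (fun a : Fin (L+1) => Q ↑a) = pathVertsN Q L := by
  ext v
  simp only [pathVerts, mem_image, mem_univ, true_and, mem_pathVertsN]
  constructor
  · rintro ⟨i, rfl⟩; exact ⟨i, Nat.lt_succ_iff.mp i.isLt, rfl⟩
  · rintro ⟨i, hi, rfl⟩; exact ⟨⟨i, by omega⟩, rfl⟩

lemma edgesF_pathGN {Q : ℕ → Fin n} {L : ℕ} (hinj : Set.InjOn Q (Set.Iic L)) :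
    edgesF (pathGN Q L) = pathEdgesN Q L := by
  ext e
  rw [mem_edgesF]
  unfold pathGN
  rw [SimpleGraph.edgeSet_fromEdgeSet]
  simp only [Set.mem_diff, Finset.mem_coe, Set.mem_setOf_eq]
  constructor
  · tauto
  · intro he
    refine ⟨he, ?_⟩
    rw [mem_pathEdgesN] at he
    obtain ⟨i, hi, rfl⟩ := he
    rw [Sym2.mem_diagSet, Sym2.isDiag_iff_proj_eq]
    intro hQ
    have := hinj (by simp only [Set.mem_Iic]; omega) (by simp only [Set.mem_Iic]; omega) hQ
    omega

lemma supportF_pathGN {Q : ℕ → Fin n} {L : ℕ} (hinj : Set.InjOn Q (Set.Iic L)) (hL : 1 ≤ L) :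
    supportF (pathGN Q L) = pathVertsN Q L := by
  ext v
  rw [mem_supportF, mem_pathVertsN]
  constructor
  · rintro ⟨w, hadj⟩
    rw [pathGN, SimpleGraph.fromEdgeSet_adj] at hadj
    obtain ⟨he, -⟩ := hadj
    rw [Finset.mem_coe, mem_pathEdgesN] at he
    obtain ⟨i, hi, hs⟩ := he
    rw [Sym2.eq_iff] at hs
    rcases hs with h | h
    · exact ⟨i, by omega, h.1.symm⟩
    · exact ⟨i+1, by omega, h.1.symm⟩
  · rintro ⟨i, hi, rfl⟩
    rcases Nat.lt_or_ge i L with h | h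
    · refine ⟨Q (i+1), ?_⟩
      rw [pathGN, SimpleGraph.fromEdgeSet_adj]
      refine ⟨by rw [Finset.mem_coe, mem_pathEdgesN]; exact ⟨i, h, rfl⟩, ?_⟩
      intro hQ
      have := hinj (by simp [Set.mem_Iic]; omega) (by simp [Set.mem_Iic]; omega) hQ
      omega
    · have hiL : i = L := by omega
      refine ⟨Q (i-1), ?_⟩
      rw [pathGN, SimpleGraph.fromEdgeSet_adj]
      constructor
      · rw [Finset.mem_coe, mem_pathEdgesN]
        refine ⟨i-1, by omega, ?_⟩
        rw [show i - 1 + 1 = i by omega]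
        exact Sym2.eq_swap
      · intro hQ
        have := hinj (by simp only [Set.mem_Iic]; omega) (by simp only [Set.mem_Iic]; omega) hQ
        omega

lemma pathGN_le {Q : ℕ → Fin n} {L : ℕ} {G : SimpleGraph (Fin n)}
    (h : ∀ e ∈ pathEdgesN Q L, e ∈ G.edgeSet) : pathGN Q L ≤ G := by
  intro a b hab
  rw [pathGN, SimpleGraph.fromEdgeSet_adj] at hab
  have := h _ hab.1
  rwa [SimpleGraph.mem_edgeSet] at this

lemma iSup_fin_succ {α : Type*} [CompleteLattice α] {k : ℕ} (f : Fin (k+1) → α) :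
    (⨆ i, f i) = (⨆ i : Fin k, f i.castSucc) ⊔ f (Fin.last k) := by
  apply le_antisymm
  · apply iSup_le
    intro i
    induction i using Fin.lastCases with
    | last => exact le_sup_right
    | cast j => exact le_sup_of_le_left (le_iSup (fun i : Fin k => f i.castSucc) j)
  · apply sup_le
    · exact iSup_le fun j => le_iSup f j.castSucc
    · exact le_iSup f (Fin.last k)

section Step

variable (S' : SimpleGraph (Fin n)) (B : Finset (Fin n)) (Q : ℕ → Fin n) (L : ℕ)

def NewE (i : ℕ) : Prop := i < L ∧ s(Q i, Q (i+1)) ∉ edgesF S'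

def StartsF : Finset ℕ := (range L).filter (fun a => NewE S' Q L a ∧ Q a ∈ B)

def stopsF (a : ℕ) : Finset ℕ :=
  (range (L+1)).filter (fun b => a < b ∧ (b = L ∨ Q b ∈ B ∨ ¬ NewE S' Q L b))

def endA (a : ℕ) : ℕ := WithTop.untopD (a+1) ((stopsF S' B Q L a).min)

variable {S' B Q L}

lemma mem_StartsF {a : ℕ} :
    a ∈ StartsF S' B Q L ↔ NewE S' Q L a ∧ Q a ∈ B := by
  simp only [StartsF, mem_filter, mem_range, and_iff_right_iff_imp]
  rintro ⟨h, -⟩; exact h.1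

lemma mem_stopsF {a b : ℕ} :
    b ∈ stopsF S' B Q L a ↔ a < b ∧ b ≤ L ∧ (b = L ∨ Q b ∈ B ∨ ¬ NewE S' Q L b) := by
  simp only [stopsF, mem_filter, mem_range, Nat.lt_succ_iff]
  tauto

lemma endA_spec (ha : a < L) :
    endA S' B Q L a ∈ stopsF S' B Q L a ∧ ∀ b ∈ stopsF S' B Q L a, endA S' B Q L a ≤ b := by
  have hne : (stopsF S' B Q L a).Nonempty := ⟨L, by rw [mem_stopsF]; exact ⟨ha, le_refl _, Or.inl rfl⟩⟩
  obtain ⟨b, hb⟩ := Finset.min_of_nonempty hne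
  have hE : endA S' B Q L a = b := by rw [endA, hb]; rfl
  rw [hE]
  refine ⟨Finset.mem_of_min hb, fun c hc => ?_⟩
  have := Finset.min_le hc
  rw [hb] at this
  exact_mod_cast this

-- ambient hypotheses
variable (hB : supportF S' ⊆ B) (hL : 1 ≤ L) (hinj : Set.InjOn Q (Set.Iic L))
  (h0 : Q 0 ∈ B) (hLB : Q L ∈ B)

include hB in
lemma old_edge_mem (i : ℕ) (hi : i < L) (h : ¬ NewE S' Q L i) :
    Q i ∈ B ∧ Q (i+1) ∈ B := by
  rw [NewE, not_and, not_not] at h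
  have he := h hi
  rw [mem_edgesF, SimpleGraph.mem_edgeSet] at he
  exact ⟨hB (mem_supportF.mpr ⟨_, he⟩), hB (mem_supportF.mpr ⟨_, he.symm⟩)⟩

include hB hLB in
lemma endA_lt (ha : a ∈ StartsF S' B Q L) :
    a < endA S' B Q L a ∧ endA S' B Q L a ≤ L ∧ Q (endA S' B Q L a) ∈ B := by
  rw [mem_StartsF] at ha
  have haL : a < L := ha.1.1
  obtain ⟨hmem, -⟩ := endA_spec (S':=S') (B:=B) (Q:=Q) haL
  rw [mem_stopsF] at hmem
  obtain ⟨h1, h2, h3⟩ := hmem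
  refine ⟨h1, h2, ?_⟩
  rcases h3 with hEL | h | h
  · rw [hEL]; exact hLB
  · exact h
  · rcases Nat.lt_or_ge (endA S' B Q L a) L with hlt | hge
    · exact (old_edge_mem hB _ hlt h).1
    · have : endA S' B Q L a = L := by omega
      rw [this]; exact hLB

lemma not_stop_of_lt_endA (haL : a < L) {c : ℕ} (h1 : a < c) (h2 : c < endA S' B Q L a) :
    c ≠ L ∧ Q c ∉ B ∧ NewE S' Q L c := by
  obtain ⟨-, hmin⟩ := endA_spec (S':=S') (B:=B) (Q:=Q) haL
  by_contra hcon
  have hcL : c ≤ L := by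
    obtain ⟨hmem, -⟩ := endA_spec (S':=S') (B:=B) (Q:=Q) haL
    rw [mem_stopsF] at hmem
    omega
  have : c ∈ stopsF S' B Q L a := by
    rw [mem_stopsF]
    refine ⟨h1, hcL, ?_⟩
    tauto
  exact absurd (hmin c this) (by omega)

include hB hLB in
lemma run_new (ha : a ∈ StartsF S' B Q L) {c : ℕ} (h1 : a ≤ c) (h2 : c < endA S' B Q L a) :
    NewE S' Q L c := by
  rcases Nat.eq_or_lt_of_le h1 with rfl | h1'
  · exact (mem_StartsF.mp ha).1
  · exact (not_stop_of_lt_endA (mem_StartsF.mp ha).1.1 h1' h2).2.2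

include hB hLB in
lemma disjoint_runs {a a' : ℕ} (ha : a ∈ StartsF S' B Q L) (ha' : a' ∈ StartsF S' B Q L)
    (h : a < a') : endA S' B Q L a ≤ a' := by
  obtain ⟨-, hmin⟩ := endA_spec (S':=S') (B:=B) (Q:=Q) (mem_StartsF.mp ha).1.1
  apply hmin
  rw [mem_stopsF]
  exact ⟨h, le_of_lt (mem_StartsF.mp ha').1.1, Or.inr (Or.inl (mem_StartsF.mp ha').2)⟩

include hB h0 in
lemma cover_new (c : ℕ) (hc : NewE S' Q L c) :
    ∃ a ∈ StartsF S' B Q L, a ≤ c ∧ c < endA S' B Q L a := by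
  classical
  have hcL : c < L := hc.1
  set T : Finset ℕ := (range (c+1)).filter (fun a => Q a ∈ B) with hT
  have hTne : T.Nonempty := ⟨0, by simp [hT, h0]⟩
  set a := T.max' hTne with haDef
  have haT : a ∈ T := T.max'_mem hTne
  have haB : Q a ∈ B := (mem_filter.mp haT).2
  have hac : a ≤ c := by have := (mem_filter.mp haT).1; rw [mem_range] at this; omega
  have hno : ∀ d, a < d → d ≤ c → Q d ∉ B := by
    intro d hd1 hd2 hdB
    have : d ∈ T := by simp [hT, hdB]; omega
    have := T.le_max' d this
    omega
  have hnew : ∀ d, a ≤ d → d ≤ c → NewE S' Q L d := by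
    intro d hd1 hd2
    by_contra hcon
    have hdL : d < L := by omega
    obtain ⟨hB1, hB2⟩ := old_edge_mem hB d hdL hcon
    rcases Nat.eq_or_lt_of_le hd2 with rfl | hdc
    · exact hcon hc
    · exact hno (d+1) (by omega) (by omega) hB2
  have haS : a ∈ StartsF S' B Q L := by
    rw [mem_StartsF]
    exact ⟨hnew a le_rfl hac, haB⟩
  refine ⟨a, haS, hac, ?_⟩
  by_contra hcon
  push_neg at hcon
  have haL : a < L := (mem_StartsF.mp haS).1.1
  obtain ⟨hmem, -⟩ := endA_spec (S':=S') (B:=B) (Q:=Q) haL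
  rw [mem_stopsF] at hmem
  obtain ⟨h1, h2, h3⟩ := hmem
  rcases h3 with hEL | hQ | hne
  · omega
  · exact hno _ h1 (by omega) hQ
  · exact hne (hnew _ (by omega) (by omega))

include hinj in
lemma edge_inj {c d : ℕ} (hc : c < L) (hd : d < L)
    (h : s(Q c, Q (c+1)) = s(Q d, Q (d+1))) : c = d := by
  rw [Sym2.eq_iff] at h
  rcases h with ⟨h1, h2⟩ | ⟨h1, h2⟩
  · exact hinj (by simp only [Set.mem_Iic]; omega) (by simp only [Set.mem_Iic]; omega) h1
  · have e1 : c = d + 1 := hinj (by simp only [Set.mem_Iic]; omega) (by simp only [Set.mem_Iic]; omega) h1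
    have e2 : c + 1 = d := hinj (by simp only [Set.mem_Iic]; omega) (by simp only [Set.mem_Iic]; omega) h2
    omega

include hB hL hinj h0 hLB in
lemma step_decompose :
    ∃ (s : ℕ) (off m : Fin s → ℕ),
      (∀ j, 1 ≤ m j ∧ off j + m j ≤ L) ∧
      (∀ j j', j ≠ j' → Disjoint (pathEdgesN (fun c => Q (off j + c)) (m j))
        (pathEdgesN (fun c => Q (off j' + c)) (m j'))) ∧
      (Finset.univ.biUnion (fun j => pathEdgesN (fun c => Q (off j + c)) (m j))
        = pathEdgesN Q L \ edgesF S') ∧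
      (∀ j, Q (off j) ∈ B ∧ Q (off j + m j) ∈ B) ∧
      (∀ j c, 0 < c → c < m j → Q (off j + c) ∉ B) ∧
      ((pathEdgesN Q L \ edgesF S').card = ∑ j, m j) ∧
      ((B ∪ pathVertsN Q L).card = B.card + ∑ j, (m j - 1)) ∧
      (∀ j j' c, j ≠ j' → 0 < c → c < m j →
        Q (off j + c) ∉ pathVertsN (fun c' => Q (off j' + c')) (m j')) ∧
      (pathVertsN Q L ⊆ B ∪ Finset.univ.biUnion
        (fun j => pathVertsN (fun c => Q (off j + c)) (m j))) := by
  classical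
  set SF := StartsF S' B Q L with hSF
  refine ⟨SF.card, fun j => ((SF.equivFin.symm j : ) : ℕ), fun j => endA S' B Q L ((SF.equivFin.symm j : ) : ℕ) - ((SF.equivFin.symm j : ) : ℕ), ?_⟩
  set off : Fin SF.card → ℕ := fun j => ((SF.equivFin.symm j : ) : ℕ) with hoffDef
  set m : Fin SF.card → ℕ := fun j => endA S' B Q L (off j) - off j with hmDef
  have hoffS : ∀ j, off j ∈ SF := fun j => (SF.equivFin.symm j).2
  have hoff_inj : Function.Injective off := by
    intro j j' h
    have := Subtype.ext (p := fun x => x ∈ SF) h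
    exact SF.equivFin.symm.injective this
  have hsurj : ∀ a ∈ SF, ∃ j, off j = a := by
    intro a ha
    refine ⟨SF.equivFin ⟨a, ha⟩, ?_⟩
    simp [hoffDef]
  have hend : ∀ j, off j < endA S' B Q L (off j) ∧ endA S' B Q L (off j) ≤ L ∧
      Q (endA S' B Q L (off j)) ∈ B := fun j => endA_lt hB hLB (hoffS j)
  have hom : ∀ j, off j + m j = endA S' B Q L (off j) := by
    intro j; have := (hend j).1; simp only [hmDef]; omega
  have hbounds : ∀ j, 1 ≤ m j ∧ off j + m j ≤ L := by
    intro j; have h1 := (hend j).1; have h2 := (hend j).2.1; constructor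
    · simp only [hmDef]; omega
    · rw [hom j]; exact h2
  -- membership in a piece's edge set
  have hpe : ∀ (j : Fin SF.card) (e : Sym2 (Fin n)),
      e ∈ pathEdgesN (fun c => Q (off j + c)) (m j) ↔
        ∃ c, off j ≤ c ∧ c < off j + m j ∧ e = s(Q c, Q (c+1)) := by
    intro j e
    rw [mem_pathEdgesN]
    constructor
    · rintro ⟨i, hi, rfl⟩
      exact ⟨off j + i, by omega, by omega, by rw [Nat.add_assoc]⟩
    · rintro ⟨c, hc1, hc2, rfl⟩
      refine ⟨c - off j, by omega, ?_⟩
      rw [show off j + (c - off j) = c by omega, show off j + (c - off j + 1) = c + 1 by omega]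
  -- edges in pieces are new
  have hnew_of_mem : ∀ (j : Fin SF.card) (c : ℕ), off j ≤ c → c < off j + m j →
      NewE S' Q L c := by
    intro j c h1 h2
    rw [hom j] at h2
    exact run_new hB hLB (hoffS j) h1 h2
  have hU : Finset.univ.biUnion (fun j => pathEdgesN (fun c => Q (off j + c)) (m j))
      = pathEdgesN Q L \ edgesF S' := by
    ext e
    simp only [mem_biUnion, mem_univ, true_and, mem_sdiff]
    constructor
    · rintro ⟨j, he⟩
      rw [hpe] at he
      obtain ⟨c, hc1, hc2, rfl⟩ := he
      have hnew := hnew_of_mem j c hc1 hc2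
      exact ⟨mem_pathEdgesN.mpr ⟨c, hnew.1, rfl⟩, hnew.2⟩
    · rintro ⟨he, hne⟩
      rw [mem_pathEdgesN] at he
      obtain ⟨i, hiL, rfl⟩ := he
      have hnew : NewE S' Q L i := ⟨hiL, hne⟩
      obtain ⟨a, haS, h1, h2⟩ := cover_new hB h0 i hnew
      obtain ⟨j, rfl⟩ := hsurj a haS
      exact ⟨j, (hpe j _).mpr ⟨i, h1, by rw [hom j]; exact h2, rfl⟩⟩
  have hIntv : ∀ (j j' : Fin SF.card), j ≠ j' → ∀ c, off j ≤ c → c < off j + m j →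
      off j' ≤ c → c < off j' + m j' → False := by
    intro j j' hjj c ha1 ha2 hb1 hb2
    have hne : off j ≠ off j' := fun h => hjj (hoff_inj h)
    rcases Nat.lt_or_ge (off j) (off j') with h | h
    · have := disjoint_runs (S':=S') (hB := hB) (hLB := hLB) (hoffS j) (hoffS j') h
      rw [← hom j] at this
      omega
    · have h' : off j' < off j := by omega
      have := disjoint_runs (S':=S') (hB := hB) (hLB := hLB) (hoffS j') (hoffS j) h'
      rw [← hom j'] at this
      omega
  have hDisj : ∀ j j', j ≠ j' → Disjoint (pathEdgesN (fun c => Q (off j + c)) (m j))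
      (pathEdgesN (fun c => Q (off j' + c)) (m j')) := by
    intro j j' hjj
    rw [Finset.disjoint_left]
    intro e hj hj'
    rw [hpe] at hj hj'
    obtain ⟨c, hc1, hc2, rfl⟩ := hj
    obtain ⟨c', hc1', hc2', hcc⟩ := hj'
    have hcL : c < L := by have := hbounds j; omega
    have hcL' : c' < L := by have := hbounds j'; omega
    have hcc' : c' = c := edge_inj hinj hcL' hcL hcc.symm
    rw [hcc'] at hc1' hc2'
    exact hIntv j j' hjj c hc1 hc2 hc1' hc2'
  have hpieceCard : ∀ j, (pathEdgesN (fun c => Q (off j + c)) (m j)).card = m j := by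
    intro j
    have hio : Set.InjOn (fun i => s(Q (off j + i), Q (off j + (i+1)))) ↑(Finset.range (m j)) := by
      intro c hc c' hc' hecc
      simp only [mem_coe, mem_range] at hc hc'
      have h1 : off j + c < L := by have := hbounds j; omega
      have h2 : off j + c' < L := by have := hbounds j; omega
      have := edge_inj hinj h1 h2 hecc
      omega
    rw [pathEdgesN, Finset.card_image_of_injOn hio, Finset.card_range]
  have hEcard : (pathEdgesN Q L \ edgesF S').card = ∑ j, m j := by
    rw [← hU, Finset.card_biUnion (fun j _ j' _ h => hDisj j j' h)]
    exact Finset.sum_congr rfl (fun j _ => hpieceCard j)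
  have hInterior : ∀ (j : Fin SF.card) c, 0 < c → c < m j → Q (off j + c) ∉ B := by
    intro j c h1 h2
    have := not_stop_of_lt_endA (S':=S') (B:=B) (Q:=Q) (mem_StartsF.mp (hoffS j)).1.1
      (show off j < off j + c by omega) (show off j + c < endA S' B Q L (off j) by rw [← hom j]; omega)
    exact this.2.1
  -- interiors
  set I : Fin SF.card → Finset (Fin n) :=
    fun j => (Finset.Ioo 0 (m j)).image (fun c => Q (off j + c)) with hI
  have hVd : pathVertsN Q L \ B = Finset.univ.biUnion I := by
    ext v
    simp only [mem_sdiff, mem_pathVertsN, mem_biUnion, mem_univ, true_and, hI, mem_image,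
      Finset.mem_Ioo]
    constructor
    · rintro ⟨⟨i, hiL, rfl⟩, hvB⟩
      have hi0 : i ≠ 0 := by rintro rfl; exact hvB h0
      have hiL' : i ≠ L := by rintro rfl; exact hvB hLB
      have hnewi : NewE S' Q L i := by
        by_contra h
        exact hvB (old_edge_mem hB i (by omega) h).1
      obtain ⟨a, haS, h1, h2⟩ := cover_new hB h0 i hnewi
      have hai : a ≠ i := by
        rintro rfl
        exact hvB (mem_StartsF.mp haS).2
      obtain ⟨j, rfl⟩ := hsurj a haS
      refine ⟨j, i - off j, ⟨by omega, by rw [← hom j] at h2; omega⟩, ?_⟩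
      rw [show off j + (i - off j) = i by omega]
    · rintro ⟨j, c, ⟨h1, h2⟩, rfl⟩
      refine ⟨⟨off j + c, by have := hbounds j; omega, rfl⟩, hInterior j c h1 h2⟩
  have hIdisj : ∀ (j : Fin SF.card), ∀ _ : j ∈ Finset.univ, ∀ (j' : Fin SF.card),
      ∀ _ : j' ∈ Finset.univ, j ≠ j' → Disjoint (I j) (I j') := by
    intro j _ j' _ hjj
    rw [Finset.disjoint_left]
    simp only [hI, mem_image, Finset.mem_Ioo]
    rintro v ⟨c, ⟨h1, h2⟩, rfl⟩ ⟨c', ⟨h1', h2'⟩, he⟩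
    have hb := hbounds j
    have hb' := hbounds j'
    have : off j' + c' = off j + c :=
      hinj (show off j' + c' ∈ Set.Iic L by simp only [Set.mem_Iic]; omega)
        (show off j + c ∈ Set.Iic L by simp only [Set.mem_Iic]; omega) he
    exact hIntv j j' hjj (off j + c) (by omega) (by omega) (by omega) (by omega)
  have hIcard : ∀ j, (I j).card = m j - 1 := by
    intro j
    have hio : Set.InjOn (fun c => Q (off j + c)) ↑(Finset.Ioo 0 (m j)) := by
      intro c hc c' hc' hecc
      simp only [mem_coe, Finset.mem_Ioo] at hc hc'
      have hb := hbounds j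
      have := hinj (show off j + c ∈ Set.Iic L by simp only [Set.mem_Iic]; omega)
        (show off j + c' ∈ Set.Iic L by simp only [Set.mem_Iic]; omega) hecc
      omega
    rw [hI]
    rw [Finset.card_image_of_injOn hio, Nat.card_Ioo]
    omega
  have hVcard : (B ∪ pathVertsN Q L).card = B.card + ∑ j, (m j - 1) := by
    rw [← Finset.union_sdiff_self_eq_union, Finset.card_union_of_disjoint Finset.disjoint_sdiff,
      hVd, Finset.card_biUnion hIdisj]
    congr 1
    exact Finset.sum_congr rfl (fun j _ => hIcard j)
  have hNotOther : ∀ (j j' : Fin SF.card) (c : ℕ), j ≠ j' → 0 < c → c < m j →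
      Q (off j + c) ∉ pathVertsN (fun c' => Q (off j' + c')) (m j') := by
    intro j j' c hjj h1 h2 hmem
    rw [mem_pathVertsN] at hmem
    obtain ⟨c', hc', heq⟩ := hmem
    have hbj := hbounds j
    have hbj' := hbounds j'
    have hidx : off j' + c' = off j + c :=
      hinj (show off j' + c' ∈ Set.Iic L by simp only [Set.mem_Iic]; omega)
        (show off j + c ∈ Set.Iic L by simp only [Set.mem_Iic]; omega) heq
    rcases Nat.eq_or_lt_of_le hc' with hEq | hlt
    · apply hInterior j c h1 h2
      rw [← heq, hEq, hom j']
      exact (hend j').2.2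
    · exact hIntv j j' hjj (off j + c) (by omega) (by omega) (by omega) (by omega)
  have hVcover : pathVertsN Q L ⊆ B ∪ Finset.univ.biUnion
      (fun j => pathVertsN (fun c => Q (off j + c)) (m j)) := by
    intro v hv
    rw [Finset.mem_union]
    by_cases hvB : v ∈ B
    · exact Or.inl hvB
    · right
      have : v ∈ pathVertsN Q L \ B := by rw [mem_sdiff]; exact ⟨hv, hvB⟩
      rw [hVd] at this
      rw [mem_biUnion] at this ⊢
      obtain ⟨j, -, hj⟩ := this
      refine ⟨j, mem_univ j, ?_⟩
      rw [hI] at hj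
      rw [mem_image] at hj
      obtain ⟨c, hc, rfl⟩ := hj
      rw [Finset.mem_Ioo] at hc
      exact mem_pathVertsN.mpr ⟨c, by omega, rfl⟩
  exact ⟨hbounds, hDisj, hU, fun j => ⟨(mem_StartsF.mp (hoffS j)).2, by rw [hom j]; exact (hend j).2.2⟩,
    hInterior, hEcard, hVcard, hNotOther, hVcover⟩

end Step

lemma biUnion_fin_succ {α : Type*} [DecidableEq α] {k : ℕ} (f : Fin (k+1) → Finset α) :
    Finset.univ.biUnion f
      = (Finset.univ.biUnion (fun i : Fin k => f i.castSucc)) ∪ f (Fin.last k) := by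
  ext x
  simp only [mem_biUnion, mem_univ, true_and, mem_union]
  constructor
  · rintro ⟨i, hi⟩
    induction i using Fin.lastCases with
    | last => exact Or.inr hi
    | cast j => exact Or.inl ⟨j, hi⟩
  · rintro (⟨j, hj⟩ | h)
    exacts [⟨j.castSucc, hj⟩, ⟨Fin.last k, h⟩]

lemma biUnion_fin_add {α : Type*} [DecidableEq α] {t s : ℕ} (f : Fin (t+s) → Finset α) :
    Finset.univ.biUnion f
      = (Finset.univ.biUnion (fun i : Fin t => f (Fin.castAdd s i)))
        ∪ (Finset.univ.biUnion (fun i : Fin s => f (Fin.natAdd t i))) := by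
  ext x
  simp only [mem_biUnion, mem_univ, true_and, mem_union]
  constructor
  · rintro ⟨i, hi⟩
    rcases Nat.lt_or_ge (i:ℕ) t with h | h
    · refine Or.inl ⟨⟨(i:ℕ), h⟩, ?_⟩
      rwa [show Fin.castAdd s ⟨(i:ℕ), h⟩ = i from by ext; simp]
    · refine Or.inr ⟨⟨(i:ℕ) - t, by omega⟩, ?_⟩
      rwa [show Fin.natAdd t ⟨(i:ℕ) - t, by omega⟩ = i from by ext; simp; omega]
  · rintro (⟨j, hj⟩ | ⟨j, hj⟩)
    exacts [⟨_, hj⟩, ⟨_, hj⟩]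

lemma deg_two_inner {n : ℕ} {Q : ℕ → Fin n} {L : ℕ} (hinj : Set.InjOn Q (Set.Iic L))
    {x : ℕ} (h1 : 0 < x) (h2 : x < L) {G : SimpleGraph (Fin n)}
    (hle : pathGN Q L ≤ G) : 2 ≤ degF G (Q x) := by
  have hne : Q (x-1) ≠ Q (x+1) := by
    intro h
    have := hinj (show x-1 ∈ Set.Iic L by simp only [Set.mem_Iic]; omega)
      (show x+1 ∈ Set.Iic L by simp only [Set.mem_Iic]; omega) h
    omega
  have hadj1 : (pathGN Q L).Adj (Q x) (Q (x-1)) := by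
    rw [pathGN, SimpleGraph.fromEdgeSet_adj]
    constructor
    · rw [Finset.mem_coe, mem_pathEdgesN]
      refine ⟨x-1, by omega, ?_⟩
      rw [show x - 1 + 1 = x by omega]
      exact Sym2.eq_swap
    · intro h
      have := hinj (show x ∈ Set.Iic L by simp only [Set.mem_Iic]; omega)
        (show x-1 ∈ Set.Iic L by simp only [Set.mem_Iic]; omega) h
      omega
  have hadj2 : (pathGN Q L).Adj (Q x) (Q (x+1)) := by
    rw [pathGN, SimpleGraph.fromEdgeSet_adj]
    constructor
    · rw [Finset.mem_coe, mem_pathEdgesN]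
      exact ⟨x, h2, rfl⟩
    · intro h
      have := hinj (show x ∈ Set.Iic L by simp only [Set.mem_Iic]; omega)
        (show x+1 ∈ Set.Iic L by simp only [Set.mem_Iic]; omega) h
      omega
  exact two_le_degF hne (hle hadj1) (hle hadj2)

lemma aux_decompose {n : ℕ} (M : ℕ) (H : SimpleGraph (Fin n)) (VH : Finset (Fin n))
    (hVH : supportF H ⊆ VH) :
    ∀ (k : ℕ) (len : Fin k → ℕ), (∀ i, 1 ≤ len i ∧ len i ≤ M) →
    ∀ (q : Fin k → ℕ → Fin n), (∀ i, Set.InjOn (q i) (Set.Iic (len i))) →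
    (∀ i, q i 0 ∈ VH ∧ q i (len i) ∈ VH) →
    ∃ (t : ℕ) (plen : Fin t → ℕ) (Q : Fin t → ℕ → Fin n),
      (∀ j, 1 ≤ plen j ∧ plen j ≤ M) ∧
      (∀ j, Set.InjOn (Q j) (Set.Iic (plen j))) ∧
      (∀ j j', j ≠ j' → Disjoint (pathEdgesN (Q j) (plen j)) (pathEdgesN (Q j') (plen j'))) ∧
      (Finset.univ.biUnion (fun j => pathEdgesN (Q j) (plen j))
        = edgesF (H ⊔ ⨆ i, pathGN (q i) (len i)) \ edgesF H) ∧
      (∀ j, Q j 0 ∈ VH ∪ (Finset.univ.filter (fun k' => k' < j)).biUnion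
            (fun k' => pathVertsN (Q k') (plen k')) ∧
          Q j (plen j) ∈ VH ∪ (Finset.univ.filter (fun k' => k' < j)).biUnion
            (fun k' => pathVertsN (Q k') (plen k'))) ∧
      (∀ j c, 0 < c → c < plen j →
        Q j c ∉ VH ∪ (Finset.univ.filter (fun k' => k' < j)).biUnion
          (fun k' => pathVertsN (Q k') (plen k'))) ∧
      (∀ j c, 0 < c → c < plen j → 2 ≤ degF (H ⊔ ⨆ i, pathGN (q i) (len i)) (Q j c)) ∧
      ((edgesF (H ⊔ ⨆ i, pathGN (q i) (len i))).card = (edgesF H).card + ∑ j, plen j) ∧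
      ((VH ∪ Finset.univ.biUnion (fun i => pathVertsN (q i) (len i))).card
        = VH.card + ∑ j, (plen j - 1)) ∧
      (supportF (H ⊔ ⨆ i, pathGN (q i) (len i)) ⊆
        VH ∪ Finset.univ.biUnion (fun i => pathVertsN (q i) (len i))) ∧
      (VH ∪ Finset.univ.biUnion (fun j => pathVertsN (Q j) (plen j))
        = VH ∪ Finset.univ.biUnion (fun i => pathVertsN (q i) (len i))) := by
  intro k
  induction k with
  | zero =>
    intro len hlen q hq hend
    have hS : (H ⊔ ⨆ i : Fin 0, pathGN (q i) (len i)) = H := by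
      rw [iSup_of_empty, sup_bot_eq]
    refine ⟨0, Fin.elim0, Fin.elim0, fun j => j.elim0, fun j => j.elim0, fun j => j.elim0,
      ?_, fun j => j.elim0, fun j => j.elim0, fun j => j.elim0, ?_, ?_, ?_, ?_⟩
    · rw [hS]; simp
    · rw [hS]; simp
    · simp
    · rw [hS]; simpa using hVH
    · simp
  | succ k IH =>
    intro len hlen q hq hend
    obtain ⟨t, plen, Q, B1, B2, B3, B4, B5, B6, B7, B8, B9, B10, B11⟩ :=
      IH (fun i => len i.castSucc) (fun i => hlen _) (fun i => q i.castSucc)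
        (fun i => hq _) (fun i => hend _)
    set Sk := H ⊔ ⨆ i : Fin k, pathGN (q i.castSucc) (len i.castSucc) with hSkdef
    set L := len (Fin.last k) with hLdef
    set R : ℕ → Fin n := q (Fin.last k) with hRdef
    set Sk1 := H ⊔ ⨆ i : Fin (k+1), pathGN (q i) (len i) with hSk1def
    have hSk1 : Sk1 = Sk ⊔ pathGN R L := by
      rw [hSk1def, iSup_fin_succ (fun i : Fin (k+1) => pathGN (q i) (len i)), ← sup_assoc]
    set W : Finset (Fin n) :=
      VH ∪ Finset.univ.biUnion (fun i : Fin k => pathVertsN (q i.castSucc) (len i.castSucc)) with hWdef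
    set W1 := VH ∪ Finset.univ.biUnion (fun i : Fin (k+1) => pathVertsN (q i) (len i)) with hW1def
    have hW1 : W1 = W ∪ pathVertsN R L := by
      rw [hW1def, biUnion_fin_succ (fun i : Fin (k+1) => pathVertsN (q i) (len i)), hWdef,
        Finset.union_assoc]
    have hRinj : Set.InjOn R (Set.Iic L) := hq _
    have hRL : 1 ≤ L := (hlen _).1
    have hR0 : R 0 ∈ W := Finset.mem_union_left _ (hend _).1
    have hRLB : R L ∈ W := Finset.mem_union_left _ (hend _).2
    obtain ⟨s, soff, sm, SB, SD, SU, SE, SI, SEc, SVc, SO, SCov⟩ :=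
      step_decompose (S' := Sk) (B := W) B10 hRL hRinj hR0 hRLB
    set plen1 : Fin (t+s) → ℕ :=
      fun j => if h : (j:ℕ) < t then plen ⟨(j:ℕ), h⟩
        else sm ⟨(j:ℕ) - t, by have := j.isLt; omega⟩ with hplen1
    set Q1 : Fin (t+s) → ℕ → Fin n :=
      fun j => if h : (j:ℕ) < t then Q ⟨(j:ℕ), h⟩
        else (fun c => R (soff ⟨(j:ℕ) - t, by have := j.isLt; omega⟩ + c)) with hQ1
    have hpCast : ∀ jj : Fin t, plen1 (Fin.castAdd s jj) = plen jj :=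
      fun jj => dif_pos jj.isLt
    have hqCast : ∀ jj : Fin t, Q1 (Fin.castAdd s jj) = Q jj :=
      fun jj => dif_pos jj.isLt
    have hpNat : ∀ jj : Fin s, plen1 (Fin.natAdd t jj) = sm jj :=
      fun jj => by
        have h : ¬ ((Fin.natAdd t jj : Fin (t+s)) : ℕ) < t := by simp
        have e : plen1 (Fin.natAdd t jj) = sm ⟨((Fin.natAdd t jj : Fin (t+s)) : ℕ) - t,
          by have := (Fin.natAdd t jj).isLt; omega⟩ := dif_neg h
        rw [e]
        congr 1
        apply Fin.ext
        simp
    have hqNat : ∀ jj : Fin s, Q1 (Fin.natAdd t jj) = fun c => R (soff jj + c) :=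
      fun jj => by
        have h : ¬ ((Fin.natAdd t jj : Fin (t+s)) : ℕ) < t := by simp
        have e : Q1 (Fin.natAdd t jj) = fun c => R (soff ⟨((Fin.natAdd t jj : Fin (t+s)) : ℕ) - t,
          by have := (Fin.natAdd t jj).isLt; omega⟩ + c) := dif_neg h
        rw [e]
        have : (⟨((Fin.natAdd t jj : Fin (t+s)) : ℕ) - t, by have := (Fin.natAdd t jj).isLt; omega⟩ : Fin s) = jj := by
          apply Fin.ext; simp
        rw [this]
    have hOldSub : ∀ jj : Fin t, pathEdgesN (Q jj) (plen jj) ⊆ edgesF Sk := by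
      intro jj e he
      have hm : e ∈ Finset.univ.biUnion (fun j => pathEdgesN (Q j) (plen j)) :=
        Finset.mem_biUnion.mpr ⟨jj, mem_univ _, he⟩
      rw [B4] at hm
      exact (Finset.mem_sdiff.mp hm).1
    have hNewSub : ∀ jj : Fin s,
        pathEdgesN (fun c => R (soff jj + c)) (sm jj) ⊆ pathEdgesN R L \ edgesF Sk := by
      intro jj e he
      rw [← SU]
      exact Finset.mem_biUnion.mpr ⟨jj, mem_univ _, he⟩
    have hE1 : edgesF Sk1 = edgesF Sk ∪ pathEdgesN R L := by
      rw [hSk1, edgesF_sup, edgesF_pathGN hRinj]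
    have hHSk : edgesF H ⊆ edgesF Sk := edgesF_mono le_sup_left
    -- old pieces' vertices are inside W
    have hOldVsub : ∀ jj : Fin t, pathVertsN (Q jj) (plen jj) ⊆ W := by
      intro jj v hv
      have : v ∈ VH ∪ Finset.univ.biUnion (fun j => pathVertsN (Q j) (plen j)) :=
        Finset.mem_union_right _ (Finset.mem_biUnion.mpr ⟨jj, mem_univ _, hv⟩)
      rw [B11] at this
      exact this
    refine ⟨t + s, plen1, Q1, ?_, ?_, ?_, ?_, ?_, ?_, ?_, ?_, ?_, ?_, ?_⟩
    -- C1 bounds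
    · intro j
      by_cases h : (j:ℕ) < t
      · have e : plen1 j = plen ⟨(j:ℕ), h⟩ := dif_pos h
        rw [e]; exact B1 _
      · set jj : Fin s := ⟨(j:ℕ) - t, by have := j.isLt; omega⟩ with hjj
        have e : plen1 j = sm jj := dif_neg h
        rw [e]
        have h1 := (SB jj).1
        have h2 := (SB jj).2
        have h3 := (hlen (Fin.last k)).2
        exact ⟨h1, by omega⟩
    -- C2 injectivity
    · intro j
      by_cases h : (j:ℕ) < t
      · have e1 : plen1 j = plen ⟨(j:ℕ), h⟩ := dif_pos h
        have e2 : Q1 j = Q ⟨(j:ℕ), h⟩ := dif_pos h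
        rw [e1, e2]; exact B2 _
      · set jj : Fin s := ⟨(j:ℕ) - t, by have := j.isLt; omega⟩ with hjj
        have e1 : plen1 j = sm jj := dif_neg h
        have e2 : Q1 j = fun c => R (soff jj + c) := dif_neg h
        rw [e1, e2]
        intro c hc c' hc' hcc
        simp only [Set.mem_Iic] at hc hc'
        have hb := (SB jj).2
        have := hRinj (show soff jj + c ∈ Set.Iic L by simp only [Set.mem_Iic]; omega)
          (show soff jj + c' ∈ Set.Iic L by simp only [Set.mem_Iic]; omega) hcc
        omega
    -- C3 edge disjointness
    · intro j j' hne
      by_cases h : (j:ℕ) < t <;> by_cases h' : (j':ℕ) < t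
      · have e1 : plen1 j = plen ⟨(j:ℕ), h⟩ := dif_pos h
        have e2 : Q1 j = Q ⟨(j:ℕ), h⟩ := dif_pos h
        have e3 : plen1 j' = plen ⟨(j':ℕ), h'⟩ := dif_pos h'
        have e4 : Q1 j' = Q ⟨(j':ℕ), h'⟩ := dif_pos h'
        rw [e1, e2, e3, e4]
        apply B3
        intro hcon
        apply hne
        apply Fin.ext
        simpa using congrArg Fin.val hcon
      · have e1 : plen1 j = plen ⟨(j:ℕ), h⟩ := dif_pos h
        have e2 : Q1 j = Q ⟨(j:ℕ), h⟩ := dif_pos h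
        set jj' : Fin s := ⟨(j':ℕ) - t, by have := j'.isLt; omega⟩ with hjj'
        have e3 : plen1 j' = sm jj' := dif_neg h'
        have e4 : Q1 j' = fun c => R (soff jj' + c) := dif_neg h'
        rw [e1, e2, e3, e4]
        rw [Finset.disjoint_left]
        intro e he he'
        exact ((Finset.mem_sdiff.mp (hNewSub jj' he')).2) (hOldSub _ he)
      · set jj : Fin s := ⟨(j:ℕ) - t, by have := j.isLt; omega⟩ with hjj
        have e1 : plen1 j = sm jj := dif_neg h
        have e2 : Q1 j = fun c => R (soff jj + c) := dif_neg h
        have e3 : plen1 j' = plen ⟨(j':ℕ), h'⟩ := dif_pos h'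
        have e4 : Q1 j' = Q ⟨(j':ℕ), h'⟩ := dif_pos h'
        rw [e1, e2, e3, e4]
        rw [Finset.disjoint_left]
        intro e he he'
        exact ((Finset.mem_sdiff.mp (hNewSub jj he)).2) (hOldSub _ he')
      · set jj : Fin s := ⟨(j:ℕ) - t, by have := j.isLt; omega⟩ with hjj
        set jj' : Fin s := ⟨(j':ℕ) - t, by have := j'.isLt; omega⟩ with hjj'
        have e1 : plen1 j = sm jj := dif_neg h
        have e2 : Q1 j = fun c => R (soff jj + c) := dif_neg h
        have e3 : plen1 j' = sm jj' := dif_neg h'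
        have e4 : Q1 j' = fun c => R (soff jj' + c) := dif_neg h'
        rw [e1, e2, e3, e4]
        apply SD
        intro hcon
        apply hne
        apply Fin.ext
        have := congrArg Fin.val hcon
        simp only [hjj, hjj'] at this
        omega
    -- C4 union of edges
    · rw [biUnion_fin_add (fun j => pathEdgesN (Q1 j) (plen1 j))]
      have ha : (fun i : Fin t => pathEdgesN (Q1 (Fin.castAdd s i)) (plen1 (Fin.castAdd s i)))
          = fun i => pathEdgesN (Q i) (plen i) := funext fun i => by rw [hqCast, hpCast]
      have hb : (fun i : Fin s => pathEdgesN (Q1 (Fin.natAdd t i)) (plen1 (Fin.natAdd t i)))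
          = fun i => pathEdgesN (fun c => R (soff i + c)) (sm i) := funext fun i => by
        rw [hqNat, hpNat]
      rw [ha, hb, B4, SU, hE1]
      ext e
      simp only [Finset.mem_union, Finset.mem_sdiff]
      have := @hHSk e
      tauto
    -- C5 endpoints
    · intro j
      by_cases h : (j:ℕ) < t
      · have e1 : plen1 j = plen ⟨(j:ℕ), h⟩ := dif_pos h
        have e2 : Q1 j = Q ⟨(j:ℕ), h⟩ := dif_pos h
        have hESold : (Finset.univ.filter (fun k' => k' < j)).biUnion
              (fun k' => pathVertsN (Q1 k') (plen1 k'))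
            = (Finset.univ.filter (fun k' => k' < (⟨(j:ℕ), h⟩ : Fin t))).biUnion
              (fun k' => pathVertsN (Q k') (plen k')) := by
          ext v
          simp only [Finset.mem_biUnion, Finset.mem_filter, Finset.mem_univ, true_and,
            Fin.lt_def]
          constructor
          · rintro ⟨k', hk', hv⟩
            have hkt : (k':ℕ) < t := by omega
            have f1 : Q1 k' = Q ⟨(k':ℕ), hkt⟩ := dif_pos hkt
            have f2 : plen1 k' = plen ⟨(k':ℕ), hkt⟩ := dif_pos hkt
            rw [f1, f2] at hv
            exact ⟨⟨(k':ℕ), hkt⟩, hk', hv⟩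
          · rintro ⟨k', hk', hv⟩
            refine ⟨Fin.castAdd s k', by simpa using hk', ?_⟩
            rw [hqCast, hpCast]
            exact hv
        rw [e1, e2, hESold]
        exact B5 _
      · set jj : Fin s := ⟨(j:ℕ) - t, by have := j.isLt; omega⟩ with hjj
        have e1 : plen1 j = sm jj := dif_neg h
        have e2 : Q1 j = fun c => R (soff jj + c) := dif_neg h
        have hWsub : W ⊆ VH ∪ (Finset.univ.filter (fun k' => k' < j)).biUnion
            (fun k' => pathVertsN (Q1 k') (plen1 k')) := by
          intro v hv
          have hv' : v ∈ VH ∪ Finset.univ.biUnion (fun jj : Fin t => pathVertsN (Q jj) (plen jj)) := by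
            rw [B11]; exact hv
          rw [Finset.mem_union] at hv' ⊢
          rcases hv' with hv' | hv'
          · exact Or.inl hv'
          · right
            rw [Finset.mem_biUnion] at hv' ⊢
            obtain ⟨kk, -, hv''⟩ := hv'
            refine ⟨Fin.castAdd s kk, ?_, ?_⟩
            · rw [Finset.mem_filter]
              refine ⟨mem_univ _, ?_⟩
              rw [Fin.lt_def]
              have := kk.isLt
              simp only [Fin.coe_castAdd]
              omega
            · rw [hqCast, hpCast]; exact hv''
        rw [e1, e2]
        constructor
        · exact hWsub (SE jj).1
        · exact hWsub (SE jj).2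
    -- C6 interiors
    · intro j c h1 h2
      by_cases h : (j:ℕ) < t
      · have e1 : plen1 j = plen ⟨(j:ℕ), h⟩ := dif_pos h
        have e2 : Q1 j = Q ⟨(j:ℕ), h⟩ := dif_pos h
        rw [e1] at h2
        rw [e2]
        intro hmem
        rw [Finset.mem_union] at hmem
        rcases hmem with hmem | hmem
        · exact B6 ⟨(j:ℕ), h⟩ c h1 h2 (Finset.mem_union_left _ hmem)
        · rw [Finset.mem_biUnion] at hmem
          obtain ⟨k', hk', hv⟩ := hmem
          rw [Finset.mem_filter, Fin.lt_def] at hk'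
          have hkt : (k':ℕ) < t := by omega
          have f1 : Q1 k' = Q ⟨(k':ℕ), hkt⟩ := dif_pos hkt
          have f2 : plen1 k' = plen ⟨(k':ℕ), hkt⟩ := dif_pos hkt
          rw [f1, f2] at hv
          apply B6 ⟨(j:ℕ), h⟩ c h1 h2
          apply Finset.mem_union_right
          rw [Finset.mem_biUnion]
          exact ⟨⟨(k':ℕ), hkt⟩, by rw [Finset.mem_filter]; exact ⟨mem_univ _, by rw [Fin.lt_def]; exact hk'.2⟩, hv⟩
      · set jj : Fin s := ⟨(j:ℕ) - t, by have := j.isLt; omega⟩ with hjj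
        have e1 : plen1 j = sm jj := dif_neg h
        have e2 : Q1 j = fun c => R (soff jj + c) := dif_neg h
        rw [e1] at h2
        rw [e2]
        intro hmem
        rw [Finset.mem_union] at hmem
        rcases hmem with hmem | hmem
        · exact SI jj c h1 h2 (Finset.mem_union_left _ hmem)
        · rw [Finset.mem_biUnion] at hmem
          obtain ⟨k', hk', hv⟩ := hmem
          rw [Finset.mem_filter, Fin.lt_def] at hk'
          by_cases hkt : (k':ℕ) < t
          · have f1 : Q1 k' = Q ⟨(k':ℕ), hkt⟩ := dif_pos hkt
            have f2 : plen1 k' = plen ⟨(k':ℕ), hkt⟩ := dif_pos hkt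
            rw [f1, f2] at hv
            exact SI jj c h1 h2 (hOldVsub _ hv)
          · set kk : Fin s := ⟨(k':ℕ) - t, by have := k'.isLt; omega⟩ with hkk
            have f1 : Q1 k' = fun c => R (soff kk + c) := dif_neg hkt
            have f2 : plen1 k' = sm kk := dif_neg hkt
            rw [f1, f2] at hv
            have hnejj : jj ≠ kk := by
              intro hcon
              have := congrArg Fin.val hcon
              simp only [hjj, hkk] at this
              omega
            exact SO jj kk c hnejj h1 h2 hv
    -- C7 degrees
    · intro j c h1 h2
      by_cases h : (j:ℕ) < t
      · have e1 : plen1 j = plen ⟨(j:ℕ), h⟩ := dif_pos h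
        have e2 : Q1 j = Q ⟨(j:ℕ), h⟩ := dif_pos h
        rw [e1] at h2
        rw [e2]
        refine le_trans (B7 ⟨(j:ℕ), h⟩ c h1 h2) (degF_mono ?_ _)
        rw [hSk1]
        exact le_sup_left
      · set jj : Fin s := ⟨(j:ℕ) - t, by have := j.isLt; omega⟩ with hjj
        have e1 : plen1 j = sm jj := dif_neg h
        have e2 : Q1 j = fun c => R (soff jj + c) := dif_neg h
        rw [e1] at h2
        rw [e2]
        have hb := (SB jj).2
        have hb1 := (SB jj).1
        apply deg_two_inner hRinj (show 0 < soff jj + c by omega) (show soff jj + c < L by omega)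
        rw [hSk1]
        exact le_sup_right
    -- C8 edge count
    · have hsum : ∑ j, plen1 j = (∑ jj : Fin t, plen jj) + ∑ jj : Fin s, sm jj := by
        rw [Fin.sum_univ_add]
        simp only [hpCast, hpNat]
      rw [hE1, ← Finset.union_sdiff_self_eq_union,
        Finset.card_union_of_disjoint Finset.disjoint_sdiff, B8, SEc, hsum]
      omega
    -- C9 vertex count
    · have hsum : ∑ j, (plen1 j - 1) = (∑ jj : Fin t, (plen jj - 1)) + ∑ jj : Fin s, (sm jj - 1) := by
        rw [Fin.sum_univ_add]
        simp only [hpCast, hpNat]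
      rw [hW1, SVc, B9, hsum]
      omega
    -- C10 support
    · rw [hSk1, supportF_sup, hW1]
      exact Finset.union_subset_union B10 (le_of_eq (supportF_pathGN hRinj hRL))
    -- C11 vertex union
    · rw [biUnion_fin_add (fun j => pathVertsN (Q1 j) (plen1 j))]
      have ha : (fun i : Fin t => pathVertsN (Q1 (Fin.castAdd s i)) (plen1 (Fin.castAdd s i)))
          = fun i => pathVertsN (Q i) (plen i) := funext fun i => by rw [hqCast, hpCast]
      have hb : (fun i : Fin s => pathVertsN (Q1 (Fin.natAdd t i)) (plen1 (Fin.natAdd t i)))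
          = fun i => pathVertsN (fun c => R (soff i + c)) (sm i) := funext fun i => by
        rw [hqNat, hpNat]
      rw [ha, hb, hW1, ← Finset.union_assoc, B11]
      apply Finset.Subset.antisymm
      · apply Finset.union_subset
        · exact Finset.subset_union_left
        · intro v hv
          rw [Finset.mem_biUnion] at hv
          obtain ⟨jj, -, hv⟩ := hv
          rw [mem_pathVertsN] at hv
          obtain ⟨i, hi, rfl⟩ := hv
          apply Finset.mem_union_right
          rw [mem_pathVertsN]
          have hbb := (SB jj).2
          exact ⟨soff jj + i, by omega, rfl⟩
      · apply Finset.union_subset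
        · exact Finset.subset_union_left
        · intro v hv
          have := SCov hv
          rw [Finset.mem_union] at this
          rcases this with hthis | hthis
          · exact Finset.mem_union_left _ hthis
          · exact Finset.mem_union_right _ hthis

/-- **Statement 18** (Lemma A.3 of the paper; decomposition of `H` plus
self-avoiding paths).  Let `H` be a graph with vertex set `VH ⊆ [n]`, and let
`L₁, …, L_k` be self-avoiding paths, each of length between `1` and `M`, with
endpoints in `VH`.  Set `S = H ∪ L₁ ∪ ⋯ ∪ L_k`.  Then `E(S) ∖ E(H)` can be
decomposed into `t` self-avoiding paths `P₁, …, P_t` such that: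
(1) `V(P_j) ∩ (VH ∪ ⋃_{k' < j} V(P_{k'}) ∪ 𝓛(S)) = EndP(P_j)` for all `j`;
(2) `|E(P_j)| ≤ M` for all `j`; and
(3) `t = τ(S) − τ(H)`, where `τ` denotes the excess `|E| − |V|`. -/
theorem decompose_H_plus_paths
    (n M k : ℕ) (hM : 1 ≤ M)
    (H : SimpleGraph (Fin n)) (VH : Finset (Fin n))
    (hVH : supportF H ⊆ VH)
    (len : Fin k → ℕ) (hlen : ∀ i, 1 ≤ len i ∧ len i ≤ M)
    (q : ∀ i : Fin k, Fin (len i + 1) → Fin n)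
    (hinj : ∀ i, Function.Injective (q i))
    (hend : ∀ i, q i 0 ∈ VH ∧ q i (Fin.last (len i)) ∈ VH) :
    ∃ (t : ℕ) (plen : Fin t → ℕ) (P : ∀ j : Fin t, Fin (plen j + 1) → Fin n),
      -- the paths are self-avoiding, of length between 1 and M
      (∀ j, 1 ≤ plen j ∧ plen j ≤ M) ∧
      (∀ j, Function.Injective (P j)) ∧
      -- their edge sets decompose E(S) ∖ E(H)
      (∀ j j', j ≠ j' → Disjoint (pathEdges (P j)) (pathEdges (P j'))) ∧
      (Finset.univ.biUnion (fun j => pathEdges (P j))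
        = edgesF (H ⊔ (⨆ i, pathG (q i))) \ edgesF H) ∧
      -- (1): the vertex-intersection condition
      (∀ j : Fin t,
        pathVerts (P j) ∩
            (VH ∪ (Finset.univ.filter (fun k' => k' < j)).biUnion
              (fun k' => pathVerts (P k')) ∪ leavesF (H ⊔ (⨆ i, pathG (q i))))
          = {P j 0, P j (Fin.last (plen j))}) ∧
      -- (3): t = τ(S) − τ(H), with vertex sets VH resp. VH ∪ (path vertices)
      ((t : ℤ) =
        (((edgesF (H ⊔ (⨆ i, pathG (q i)))).card : ℤ) -
            ((VH ∪ Finset.univ.biUnion (fun i => pathVerts (q i))).card : ℤ)) -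
          (((edgesF H).card : ℤ) - (VH.card : ℤ))) := by
  classical
  set qN : ∀ _ : Fin k, ℕ → Fin n :=
    fun i c => q i ⟨min c (len i), by omega⟩ with hqN
  have hqN_app : ∀ (i : Fin k) (a : Fin (len i + 1)), qN i ↑a = q i a := by
    intro i a
    simp only [hqN]
    congr 1
    apply Fin.ext
    have := a.isLt
    exact Nat.min_eq_left (by omega)
  have hqN_inj : ∀ i, Set.InjOn (qN i) (Set.Iic (len i)) := by
    intro i c hc c' hc' hcc
    simp only [Set.mem_Iic] at hc hc'
    have h1 : qN i c = q i ⟨c, by omega⟩ := by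
      simp only [hqN]; congr 1; apply Fin.ext; exact Nat.min_eq_left hc
    have h2 : qN i c' = q i ⟨c', by omega⟩ := by
      simp only [hqN]; congr 1; apply Fin.ext; exact Nat.min_eq_left hc'
    rw [h1, h2] at hcc
    have := hinj i hcc
    simpa using congrArg Fin.val this
  have hPE : ∀ i, pathEdges (q i) = pathEdgesN (qN i) (len i) := by
    intro i
    have hfun : (fun a : Fin (len i + 1) => qN i ↑a) = q i := funext (hqN_app i)
    rw [← hfun, pathEdges_eq_N]
  have hPV : ∀ i, pathVerts (q i) = pathVertsN (qN i) (len i) := by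
    intro i
    have hfun : (fun a : Fin (len i + 1) => qN i ↑a) = q i := funext (hqN_app i)
    rw [← hfun, pathVerts_eq_N]
  have hPG : ∀ i, pathG (q i) = pathGN (qN i) (len i) := by
    intro i; rw [pathG, pathGN, hPE]
  have hS : (H ⊔ (⨆ i, pathG (q i))) = H ⊔ ⨆ i, pathGN (qN i) (len i) := by
    rw [iSup_congr hPG]
  have hend' : ∀ i, qN i 0 ∈ VH ∧ qN i (len i) ∈ VH := by
    intro i
    constructor
    · have h := hqN_app i 0
      rw [show (((0 : Fin (len i + 1))) : ℕ) = 0 by simp] at h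
      rw [h]; exact (hend i).1
    · have h := hqN_app i (Fin.last (len i))
      rw [show ((Fin.last (len i)) : ℕ) = len i by simp] at h
      rw [h]; exact (hend i).2
  obtain ⟨t, plen, Q, A1, A2, A3, A4, A5, A6, A7, A8, A9, A10, A11⟩ :=
    aux_decompose M H VH hVH k len hlen qN hqN_inj hend'
  have hPE' : ∀ j : Fin t,
      pathEdges (fun a : Fin (plen j + 1) => Q j ↑a) = pathEdgesN (Q j) (plen j) :=
    fun j => pathEdges_eq_N _
  have hPV' : ∀ j : Fin t,
      pathVerts (fun a : Fin (plen j + 1) => Q j ↑a) = pathVertsN (Q j) (plen j) :=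
    fun j => pathVerts_eq_N _
  refine ⟨t, plen, fun j => fun a => Q j ↑a, A1, ?_, ?_, ?_, ?_, ?_⟩
  · -- injectivity
    intro j a b hab
    apply Fin.ext
    exact A2 j (Set.mem_Iic.mpr (by have := a.isLt; omega))
      (Set.mem_Iic.mpr (by have := b.isLt; omega)) hab
  · -- disjointness
    intro j j' hne
    rw [hPE' j, hPE' j']
    exact A3 j j' hne
  · -- union
    simp only [hPE']
    rw [hS]
    exact A4
  · -- condition (1)
    intro j
    have key : pathVertsN (Q j) (plen j) ∩
        (VH ∪ (Finset.univ.filter (fun k' => k' < j)).biUnion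
            (fun k' => pathVertsN (Q k') (plen k'))
          ∪ leavesF (H ⊔ ⨆ i, pathGN (qN i) (len i)))
        = {Q j 0, Q j (plen j)} := by
      ext v
      rw [Finset.mem_inter, Finset.mem_insert, Finset.mem_singleton]
      constructor
      · rintro ⟨hv, hmem⟩
        rw [mem_pathVertsN] at hv
        obtain ⟨i, hi, rfl⟩ := hv
        rcases Nat.eq_zero_or_pos i with rfl | hpos
        · exact Or.inl rfl
        rcases Nat.eq_or_lt_of_le hi with rfl | hlt
        · exact Or.inr rfl
        exfalso
        rw [Finset.mem_union] at hmem
        rcases hmem with hmem | hmem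
        · exact A6 j i hpos hlt hmem
        · have hdeg := A7 j i hpos hlt
          rw [leavesF, Finset.mem_filter] at hmem
          omega
      · intro hv
        rcases hv with rfl | rfl
        · exact ⟨mem_pathVertsN.mpr ⟨0, by omega, rfl⟩,
            Finset.mem_union_left _ (A5 j).1⟩
        · exact ⟨mem_pathVertsN.mpr ⟨plen j, le_rfl, rfl⟩,
            Finset.mem_union_left _ (A5 j).2⟩
    simp only [hPV']
    rw [hS]
    simp only [Fin.val_zero, Fin.val_last]
    exact key
  · -- the count
    have hWconv : VH ∪ Finset.univ.biUnion (fun i => pathVerts (q i))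
        = VH ∪ Finset.univ.biUnion (fun i => pathVertsN (qN i) (len i)) := by
      simp only [hPV]
    have h3 : ∑ j, (plen j - 1) + t = ∑ j, plen j := by
      have e : ∑ j : Fin t, ((plen j - 1) + 1) = ∑ j, plen j :=
        Finset.sum_congr rfl (fun j _ => by have := (A1 j).1; omega)
      rw [← e, Finset.sum_add_distrib]
      simp
    rw [hS, hWconv, A8, A9]
    omega


end
end
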